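/- arXiv:2007.15768 — 3 statements merged into one kernel-verified Lean document; each statement's English description precedes it below -/
import Mathlib

section
/- Let Z be a special symbol of defect 1 and size (m+1,m) and Z' a special symbol of defect 0 and size (m',m') with m' = m or m' = m+1, and suppose D_{Z,Z'} ≠ ∅. Let Ψ' = {c_k, d_l} be a consecutive pair in Z'_I (so l = k or l = k−1). Then (Z, Λ_{Ψ'}) ∈ D_{Z,Z'} if and only if: a_k > c_k and d_k ≥ b_k, when m' = m and l = k; c_k ≥ a_k and b_{k−1} > d_{k−1}, when m' = m and l = k−1; a_k ≥ c_k and d_k > b_k, when m' = m+1 and l = k; c_k > a_k and b_{k−1} ≥ d_{k−1}, when m' = m+1 and l = k−1. (Here a_i, b_i are the rows of Z and c_i, d_i the rows of Z'.) -/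
open scoped symmDiff

/-- A symbol: a pair of finsets of naturals (its two rows, each read in
strictly decreasing order). -/
abbrev Symb :=  Finset ℕ × Finset ℕ

/-- The strictly decreasing enumeration of a finset of naturals. -/
def rowList (s : Finset ℕ) : List ℕ := (s.sort (· ≤ ·)).reverse

/-- The `i`-th entry (0-based) of the strictly decreasing enumeration of `s`. -/
def ent (s : Finset ℕ) (i : ℕ) : Option ℕ := (rowList s)[i]?

/-- Impose a relation on two optional entries whenever both exist. -/
def oRel (r : ℕ → ℕ → Prop) : Option ℕ → Option ℕ → Prop
  | some x, some y => r x y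
  | _, _ => True

/-- `Z` is a special symbol of defect 1 and size `(m+1, m)`. -/
def IsSpecial1 (Z : Symb) (m : ℕ) : Prop :=
  Z.1.card = m + 1 ∧ Z.2.card = m ∧
  (∀ i, oRel (· ≥ ·) (ent Z.1 i) (ent Z.2 i)) ∧
  (∀ i, oRel (· ≥ ·) (ent Z.2 i) (ent Z.1 (i + 1)))

/-- `Z'` is a special symbol of defect 0 and size `(m', m')`. -/
def IsSpecial0 (Z : Symb) (m' : ℕ) : Prop :=
  Z.1.card = m' ∧ Z.2.card = m' ∧
  (∀ i, oRel (· ≥ ·) (ent Z.1 i) (ent Z.2 i)) ∧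
  (∀ i, oRel (· ≥ ·) (ent Z.2 i) (ent Z.1 (i + 1)))

/-- `Z_I`: the entries of `Z` lying in exactly one row (row remembered). -/
def ZI (Z : Symb) : Symb := (Z.1 \ Z.2, Z.2 \ Z.1)

/-- `M` is a subset of `Z_I`. -/
def SubZI (M Z : Symb) : Prop := M.1 ⊆ Z.1 \ Z.2 ∧ M.2 ⊆ Z.2 \ Z.1

/-- `Z` is regular: no degenerate entries. -/
def Regular (Z : Symb) : Prop := Disjoint Z.1 Z.2

/-- `Λ_M`: exchange the rows of the entries of `M`. -/
def lam (Z M : Symb) : Symb := ((Z.1 \ M.1) ∪ M.2, (Z.2 \ M.2) ∪ M.1)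

/-- `S̄_Z = {Λ_M : M ⊆ Z_I}`. -/
def Sbar (Z : Symb) : Set Symb := {Λ | ∃ M, SubZI M Z ∧ Λ = lam Z M}

/-- Size and inequality conditions of `B̄⁺_{Z,Z'}` in the case `m' = m`. -/
def Bm (Λ Λ' : Symb) : Prop :=
  Λ'.1.card = Λ.2.card ∧ Λ'.2.card + 1 = Λ.1.card ∧
  (∀ i, oRel (· > ·) (ent Λ.1 i) (ent Λ'.2 i)) ∧
  (∀ i, oRel (· ≥ ·) (ent Λ'.2 i) (ent Λ.1 (i + 1))) ∧
  (∀ i, oRel (· > ·) (ent Λ.2 i) (ent Λ'.1 (i + 1))) ∧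
  (∀ i, oRel (· ≥ ·) (ent Λ'.1 i) (ent Λ.2 i))

/-- Size and inequality conditions of `B̄⁺_{Z,Z'}` in the case `m' = m + 1`. -/
def Bm1 (Λ Λ' : Symb) : Prop :=
  Λ'.1.card = Λ.2.card + 1 ∧ Λ'.2.card = Λ.1.card ∧
  (∀ i, oRel (· ≥ ·) (ent Λ.1 i) (ent Λ'.2 i)) ∧
  (∀ i, oRel (· > ·) (ent Λ'.2 i) (ent Λ.1 (i + 1))) ∧
  (∀ i, oRel (· ≥ ·) (ent Λ.2 i) (ent Λ'.1 (i + 1))) ∧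
  (∀ i, oRel (· > ·) (ent Λ'.1 i) (ent Λ.2 i))

/-- The relation `B̄⁺_{Z,Z'}`. -/
def BbarPlus (Z Z' : Symb) (m m' : ℕ) (Λ Λ' : Symb) : Prop :=
  Λ ∈ Sbar Z ∧ Λ' ∈ Sbar Z' ∧
  ((m' = m ∧ Bm Λ Λ') ∨ (m' = m + 1 ∧ Bm1 Λ Λ'))

/-- The relation `D_{Z,Z'}`. -/
def DRel (Z Z' : Symb) (m m' : ℕ) (A A' : Symb) : Prop :=
  BbarPlus Z Z' m m' A A' ∧
  A.1.card = m + 1 ∧ A.2.card = m ∧ A'.1.card = m' ∧ A'.2.card = m'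

/-- `{c, d}` is a consecutive pair in `Z_I`. -/
def ConsecPair (Z : Symb) (c d : ℕ) : Prop :=
  c ∈ Z.1 \ Z.2 ∧ d ∈ Z.2 \ Z.1 ∧
  ∀ x ∈ (Z.1 \ Z.2) ∪ (Z.2 \ Z.1), ¬(min c d < x ∧ x < max c d)

/-- count of elements `≥ t`. -/
def Nge (t : ℕ) (s : Finset ℕ) : ℕ := (s.filter (fun a => t ≤ a)).card

lemma Nge_le_card (t : ℕ) (s : Finset ℕ) : Nge t s ≤ s.card :=
  Finset.card_filter_le _ _

lemma length_rowList (s : Finset ℕ) : (rowList s).length = s.card := by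
  simp [rowList]

lemma sorted_rowList (s : Finset ℕ) : (rowList s).Pairwise (· ≥ ·) := by
  rw [rowList, List.pairwise_reverse]
  exact (Finset.pairwise_sort s (· ≤ ·)).imp (fun hxy => hxy)

lemma countP_rowList (t : ℕ) (s : Finset ℕ) :
    (rowList s).countP (fun a => decide (t ≤ a)) = Nge t s := by
  rw [rowList, List.countP_reverse]
  have h1 : Multiset.countP (t ≤ ·) ↑(s.sort (· ≤ ·)) = (s.sort (· ≤ ·)).countP (fun a => decide (t ≤ a)) :=
    Multiset.coe_countP _ _
  rw [← h1, Finset.sort_eq]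
  have h2 : (s.filter (fun a => t ≤ a)).val = Multiset.filter (t ≤ ·) s.val := by
    simp [Finset.filter_val]
  rw [Nge, Finset.card_def, h2, ← Multiset.countP_eq_card_filter]

lemma ent_isSome_iff {s : Finset ℕ} {i : ℕ} : (ent s i).isSome ↔ i < s.card := by
  rw [ent]
  by_cases h : i < (rowList s).length
  · simp [List.getElem?_eq_getElem h, length_rowList] at h ⊢; omega
  · rw [length_rowList] at h
    have hlen : (rowList s).length ≤ i := by rw [length_rowList]; omega
    simp [List.getElem?_eq_none hlen, h]

lemma ent_some_of_lt {s : Finset ℕ} {i : ℕ} (h : i < s.card) : ∃ x, ent s i = some x := by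
  have := ent_isSome_iff.2 h
  exact Option.isSome_iff_exists.1 this

lemma lt_card_of_ent {s : Finset ℕ} {i x : ℕ} (h : ent s i = some x) : i < s.card :=
  ent_isSome_iff.1 (by simp [h])

lemma mem_of_ent {s : Finset ℕ} {i x : ℕ} (h : ent s i = some x) : x ∈ s := by
  have : x ∈ rowList s := List.mem_of_getElem? h
  have : x ∈ s.sort (· ≤ ·) := by rwa [rowList, List.mem_reverse] at this
  rwa [Finset.mem_sort] at this

lemma sorted_bridge {t : ℕ} : ∀ {l : List ℕ}, l.Pairwise (· ≥ ·) → ∀ {i : ℕ} (h : i < l.length),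
    (t ≤ l[i] ↔ i < l.countP (fun a => decide (t ≤ a))) := by
  intro l
  induction l with
  | nil => intro _ i h; simp at h
  | cons x xs ih =>
    intro hs i h
    have hx : ∀ y ∈ xs, x ≥ y := fun y hy => List.rel_of_pairwise_cons hs hy
    have hxs : xs.Pairwise (· ≥ ·) := hs.of_cons
    rw [List.countP_cons]
    cases i with
    | zero =>
      simp only [List.getElem_cons_zero]
      constructor
      · intro ht; simp [ht]
      · intro hpos
        by_contra hnot
        have : xs.countP (fun a => decide (t ≤ a)) = 0 := by
          rw [List.countP_eq_zero]
          intro y hy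
          simp only [decide_eq_true_eq]
          intro hty
          exact hnot (le_trans hty (hx y hy))
        simp [this, hnot] at hpos
    | succ i =>
      simp only [List.getElem_cons_succ]
      have hi : i < xs.length := by simpa using h
      rw [ih hxs hi]
      constructor
      · intro hlt
        have hpos : 0 < xs.countP (fun a => decide (t ≤ a)) := by omega
        obtain ⟨y, hy, hty⟩ := List.countP_pos_iff.1 hpos
        have htx : t ≤ x := le_trans (by simpa using hty) (hx y hy)
        simp [htx]; omega
      · intro hlt
        have : (if (decide (t ≤ x)) = true then 1 else 0) ≤ 1 := by split <;> omega
        omega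

lemma bridge {s : Finset ℕ} {i x : ℕ} (h : ent s i = some x) (t : ℕ) :
    t ≤ x ↔ i < Nge t s := by
  have hi : i < (rowList s).length := by rw [length_rowList]; exact lt_card_of_ent h
  have hx : (rowList s)[i] = x := by
    have := List.getElem?_eq_getElem hi
    rw [ent] at h; rw [this] at h; exact Option.some_injective _ h
  rw [← hx, ← countP_rowList]
  exact sorted_bridge (sorted_rowList s) hi

lemma Nge_le_of_ent_lt {s : Finset ℕ} {j t : ℕ} (h : ∀ x, ent s j = some x → x < t) :
    Nge t s ≤ j := by
  by_contra hc
  push_neg at hc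
  have hj : j < s.card := lt_of_lt_of_le hc (Nge_le_card t s)
  obtain ⟨x, hx⟩ := ent_some_of_lt hj
  have := (bridge hx t).2 hc
  exact absurd this (not_le.2 (h x hx))

lemma lt_Nge_of_ent {s : Finset ℕ} {j x t : ℕ} (h : ent s j = some x) (ht : t ≤ x) :
    j < Nge t s := (bridge h t).1 ht

/-- pointwise (aligned) to counting -/
lemma count_of_pointwise {s v : Finset ℕ} {r : ℕ → ℕ → Prop} {ε : ℕ}
    (hrt : ∀ x y t, r x y → t ≤ y → t + ε ≤ x)
    (h : ∀ i, oRel r (ent s i) (ent v i))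
    (hcard : v.card ≤ s.card) (t : ℕ) : Nge t v ≤ Nge (t + ε) s := by
  rcases Nat.eq_zero_or_pos (Nge t v) with h0 | h0
  · omega
  · set j := Nge t v - 1 with hj
    have hjv : j < v.card := by
      have := Nge_le_card t v; omega
    obtain ⟨y, hy⟩ := ent_some_of_lt hjv
    have hty : t ≤ y := (bridge hy t).2 (by omega)
    obtain ⟨x, hx⟩ := ent_some_of_lt (lt_of_lt_of_le hjv hcard)
    have hr : r x y := by have := h j; rwa [hx, hy] at this
    have := lt_Nge_of_ent hx (hrt x y t hr hty)
    omega

/-- pointwise (shifted) to counting -/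
lemma count_of_pointwise_shift {s v : Finset ℕ} {r : ℕ → ℕ → Prop} {ε : ℕ}
    (hrt : ∀ x y t, r x y → t ≤ y → t + ε ≤ x)
    (h : ∀ i, oRel r (ent s i) (ent v (i + 1)))
    (hcard : v.card ≤ s.card + 1) (t : ℕ) : Nge t v ≤ Nge (t + ε) s + 1 := by
  rcases Nat.lt_or_ge (Nge t v) 2 with h0 | h0
  · omega
  · set j := Nge t v - 2 with hj
    have hjv : j + 1 < v.card := by
      have := Nge_le_card t v; omega
    obtain ⟨y, hy⟩ := ent_some_of_lt hjv
    have hty : t ≤ y := (bridge hy t).2 (by omega)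
    obtain ⟨x, hx⟩ := ent_some_of_lt (show j < s.card by omega)
    have hr : r x y := by have := h j; rwa [hx, hy] at this
    have := lt_Nge_of_ent hx (hrt x y t hr hty)
    omega

/-- counting to pointwise (aligned) -/
lemma pointwise_of_count {s v : Finset ℕ} {r : ℕ → ℕ → Prop} {ε : ℕ}
    (hrt : ∀ x y, y + ε ≤ x → r x y)
    (hc : ∀ t, Nge t v ≤ Nge (t + ε) s) :
    ∀ i, oRel r (ent s i) (ent v i) := by
  intro i
  cases hx : ent s i with
  | none => simp [oRel]
  | some x =>
    cases hy : ent v i with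
    | none => simp [oRel]
    | some y =>
      show r x y
      have h1 : i < Nge y v := lt_Nge_of_ent hy le_rfl
      have h2 : i < Nge (y + ε) s := lt_of_lt_of_le h1 (hc y)
      exact hrt x y ((bridge hx (y + ε)).2 h2)

/-- counting to pointwise (shifted) -/
lemma pointwise_of_count_shift {s v : Finset ℕ} {r : ℕ → ℕ → Prop} {ε : ℕ}
    (hrt : ∀ x y, y + ε ≤ x → r x y)
    (hc : ∀ t, Nge t v ≤ Nge (t + ε) s + 1) :
    ∀ i, oRel r (ent s i) (ent v (i + 1)) := by
  intro i
  cases hx : ent s i with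
  | none => simp [oRel]
  | some x =>
    cases hy : ent v (i + 1) with
    | none => simp [oRel]
    | some y =>
      show r x y
      have h1 : i + 1 < Nge y v := lt_Nge_of_ent hy le_rfl
      have h2 : i < Nge (y + ε) s := by have := hc y; omega
      exact hrt x y ((bridge hx (y + ε)).2 h2)

lemma hrt_ge : ∀ x y t : ℕ, x ≥ y → t ≤ y → t + 0 ≤ x := by omega
lemma hrt_gt : ∀ x y t : ℕ, x > y → t ≤ y → t + 1 ≤ x := by omega
lemma hrt_ge' : ∀ x y : ℕ, y + 0 ≤ x → x ≥ y := by omega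
lemma hrt_gt' : ∀ x y : ℕ, y + 1 ≤ x → x > y := by omega


lemma Nge_union_disjoint {t : ℕ} {u v : Finset ℕ} (h : Disjoint u v) :
    Nge t (u ∪ v) = Nge t u + Nge t v := by
  rw [Nge, Finset.filter_union, Finset.card_union_of_disjoint
    (Finset.disjoint_filter_filter h), Nge, Nge]

lemma Nge_sdiff_add {t : ℕ} {u w : Finset ℕ} (h : w ⊆ u) :
    Nge t (u \ w) + Nge t w = Nge t u := by
  rw [← Nge_union_disjoint Finset.sdiff_disjoint, Finset.sdiff_union_of_subset h]

/-- multiset-union count identity for a row swap -/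
lemma Nge_lam_sum {Z M : Symb} (hM : SubZI M Z) (t : ℕ) :
    Nge t (lam Z M).1 + Nge t (lam Z M).2 = Nge t Z.1 + Nge t Z.2 := by
  have hM1 : M.1 ⊆ Z.1 := hM.1.trans (Finset.sdiff_subset)
  have hM2 : M.2 ⊆ Z.2 := hM.2.trans (Finset.sdiff_subset)
  have hd1 : Disjoint (Z.1 \ M.1) M.2 := by
    have : Disjoint Z.1 M.2 :=
      Finset.disjoint_right.2 fun a ha => (Finset.mem_sdiff.1 (hM.2 ha)).2
    exact this.mono_left Finset.sdiff_subset
  have hd2 : Disjoint (Z.2 \ M.2) M.1 := by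
    have : Disjoint Z.2 M.1 :=
      Finset.disjoint_right.2 fun a ha => (Finset.mem_sdiff.1 (hM.1 ha)).2
    exact this.mono_left Finset.sdiff_subset
  have e1 : Nge t (lam Z M).1 = Nge t (Z.1 \ M.1) + Nge t M.2 := Nge_union_disjoint hd1
  have e2 : Nge t (lam Z M).2 = Nge t (Z.2 \ M.2) + Nge t M.1 := Nge_union_disjoint hd2
  have e3 := Nge_sdiff_add (t := t) hM1
  have e4 := Nge_sdiff_add (t := t) hM2
  omega

lemma Nge_singleton (t c : ℕ) : Nge t ({c} : Finset ℕ) = if t ≤ c then 1 else 0 := by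
  rw [Nge]; split <;> simp_all [Finset.filter_singleton]

/-- swap count identity rows -/
lemma Nge_swap {s : Finset ℕ} {c d : ℕ} (hc : c ∈ s) (hd : d ∉ s) (t : ℕ) :
    Nge t ((s \ {c}) ∪ {d}) + (if t ≤ c then 1 else 0)
      = Nge t s + (if t ≤ d then 1 else 0) := by
  have hdisj : Disjoint (s \ {c}) ({d} : Finset ℕ) := by
    simp only [Finset.disjoint_singleton_right, Finset.mem_sdiff]
    tauto
  rw [Nge_union_disjoint hdisj, Nge_singleton]
  have := Nge_sdiff_add (t := t) (Finset.singleton_subset_iff.2 hc)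
  rw [Nge_singleton] at this
  omega

lemma card_swap {s : Finset ℕ} {c d : ℕ} (hc : c ∈ s) (hd : d ∉ s) :
    ((s \ {c}) ∪ {d}).card = s.card := by
  have hdisj : Disjoint (s \ {c}) ({d} : Finset ℕ) := by
    simp only [Finset.disjoint_singleton_right, Finset.mem_sdiff]; tauto
  rw [Finset.card_union_of_disjoint hdisj, Finset.card_singleton,
    Finset.sdiff_singleton_eq_erase, Finset.card_erase_of_mem hc]
  have : 1 ≤ s.card := Finset.card_pos.2 ⟨c, hc⟩
  omega

lemma special_counts {s v : Finset ℕ}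
    (hal : ∀ i, oRel (· ≥ ·) (ent s i) (ent v i))
    (hsh : ∀ i, oRel (· ≥ ·) (ent v i) (ent s (i + 1)))
    (hcard1 : v.card ≤ s.card) (hcard2 : s.card ≤ v.card + 1) (t : ℕ) :
    Nge t v ≤ Nge t s ∧ Nge t s ≤ Nge t v + 1 :=
  ⟨count_of_pointwise hrt_ge hal hcard1 t,
   count_of_pointwise_shift hrt_ge hsh hcard2 t⟩

/-- Lemma A, case m' = m: counting inequalities between Z and Z'. -/
lemma lemA_m {m : ℕ} {Z Z' A A' : Symb} {M M' : Symb}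
    (hZs : ∀ t, Nge t Z.2 ≤ Nge t Z.1 ∧ Nge t Z.1 ≤ Nge t Z.2 + 1)
    (hZ's : ∀ t, Nge t Z'.2 ≤ Nge t Z'.1 ∧ Nge t Z'.1 ≤ Nge t Z'.2 + 1)
    (hM : SubZI M Z) (hA : A = lam Z M)
    (hM' : SubZI M' Z') (hA' : A' = lam Z' M')
    (hB : Bm A A')
    (hc1 : A.1.card = m + 1) (hc2 : A.2.card = m)
    (hc3 : A'.1.card = m) (hc4 : A'.2.card = m) (t : ℕ) :
    Nge t Z'.2 ≤ Nge (t + 1) Z.1 ∧ Nge t Z.1 ≤ Nge t Z'.2 + 1 ∧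
    Nge t Z'.1 ≤ Nge (t + 1) Z.2 + 1 ∧ Nge t Z.2 ≤ Nge t Z'.1 := by
  obtain ⟨-, -, hb1, hb2, hb3, hb4⟩ := hB
  -- counting forms for A, A'
  have k1 : ∀ u, Nge u A'.2 ≤ Nge (u + 1) A.1 :=
    count_of_pointwise hrt_gt hb1 (by omega)
  have k2 : ∀ u, Nge u A.1 ≤ Nge (u + 0) A'.2 + 1 :=
    count_of_pointwise_shift hrt_ge hb2 (by omega)
  have k3 : ∀ u, Nge u A'.1 ≤ Nge (u + 1) A.2 + 1 :=
    count_of_pointwise_shift hrt_gt hb3 (by omega)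
  have k4 : ∀ u, Nge u A.2 ≤ Nge (u + 0) A'.1 :=
    count_of_pointwise hrt_ge hb4 (by omega)
  simp only [Nat.add_zero] at k1 k2 k3 k4
  have sumA : ∀ u, Nge u A.1 + Nge u A.2 = Nge u Z.1 + Nge u Z.2 := by
    intro u; rw [hA]; exact Nge_lam_sum hM u
  have sumA' : ∀ u, Nge u A'.1 + Nge u A'.2 = Nge u Z'.1 + Nge u Z'.2 := by
    intro u; rw [hA']; exact Nge_lam_sum hM' u
  -- T'(t) ≤ T(t+1) + 1 and T(t) ≤ T'(t) + 1
  have hi : Nge t Z'.1 + Nge t Z'.2 ≤ Nge (t + 1) Z.1 + Nge (t + 1) Z.2 + 1 := by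
    have := k1 t; have := k3 t; have := sumA (t + 1); have := sumA' t; omega
  have hii : Nge t Z.1 + Nge t Z.2 ≤ Nge t Z'.1 + Nge t Z'.2 + 1 := by
    have := k2 t; have := k4 t; have := sumA t; have := sumA' t; omega
  have s1 := hZs t; have s2 := hZs (t + 1); have s3 := hZ's t
  omega

/-- Lemma A, case m' = m + 1. -/
lemma lemA_m1 {m : ℕ} {Z Z' A A' : Symb} {M M' : Symb}
    (hZs : ∀ t, Nge t Z.2 ≤ Nge t Z.1 ∧ Nge t Z.1 ≤ Nge t Z.2 + 1)
    (hZ's : ∀ t, Nge t Z'.2 ≤ Nge t Z'.1 ∧ Nge t Z'.1 ≤ Nge t Z'.2 + 1)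
    (hM : SubZI M Z) (hA : A = lam Z M)
    (hM' : SubZI M' Z') (hA' : A' = lam Z' M')
    (hB : Bm1 A A')
    (hc1 : A.1.card = m + 1) (hc2 : A.2.card = m)
    (hc3 : A'.1.card = m + 1) (hc4 : A'.2.card = m + 1) (t : ℕ) :
    Nge t Z'.2 ≤ Nge t Z.1 ∧ Nge t Z.1 ≤ Nge (t + 1) Z'.2 + 1 ∧
    Nge t Z'.1 ≤ Nge t Z.2 + 1 ∧ Nge t Z.2 ≤ Nge (t + 1) Z'.1 := by
  obtain ⟨-, -, hb1, hb2, hb3, hb4⟩ := hB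
  have k1 : ∀ u, Nge u A'.2 ≤ Nge (u + 0) A.1 :=
    count_of_pointwise hrt_ge hb1 (by omega)
  have k2 : ∀ u, Nge u A.1 ≤ Nge (u + 1) A'.2 + 1 :=
    count_of_pointwise_shift hrt_gt hb2 (by omega)
  have k3 : ∀ u, Nge u A'.1 ≤ Nge (u + 0) A.2 + 1 :=
    count_of_pointwise_shift hrt_ge hb3 (by omega)
  have k4 : ∀ u, Nge u A.2 ≤ Nge (u + 1) A'.1 :=
    count_of_pointwise hrt_gt hb4 (by omega)
  simp only [Nat.add_zero] at k1 k2 k3 k4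
  have sumA : ∀ u, Nge u A.1 + Nge u A.2 = Nge u Z.1 + Nge u Z.2 := by
    intro u; rw [hA]; exact Nge_lam_sum hM u
  have sumA' : ∀ u, Nge u A'.1 + Nge u A'.2 = Nge u Z'.1 + Nge u Z'.2 := by
    intro u; rw [hA']; exact Nge_lam_sum hM' u
  have hi : Nge t Z'.1 + Nge t Z'.2 ≤ Nge t Z.1 + Nge t Z.2 + 1 := by
    have := k1 t; have := k3 t; have := sumA t; have := sumA' t; omega
  have hii : Nge t Z.1 + Nge t Z.2 ≤ Nge (t + 1) Z'.1 + Nge (t + 1) Z'.2 + 1 := by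
    have := k2 t; have := k4 t; have := sumA t; have := sumA' (t + 1); omega
  have s1 := hZs t; have s3 := hZ's t; have s4 := hZ's (t + 1)
  omega

lemma heart1 {m k : ℕ} {Z Z' Λ : Symb} {c d : ℕ}
    (hk : 1 ≤ k)
    (hZc1 : Z.1.card = m + 1) (hZc2 : Z.2.card = m)
    (hΛc1 : Λ.1.card = m) (hΛc2 : Λ.2.card = m)
    (hc : ent Z'.1 (k - 1) = some c) (hd : ent Z'.2 (k - 1) = some d)
    (hdc : d < c)
    (hZ'al : ∀ i, oRel (· ≥ ·) (ent Z'.1 i) (ent Z'.2 i))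
    (hZ'sh : ∀ i, oRel (· ≥ ·) (ent Z'.2 i) (ent Z'.1 (i + 1)))
    (hZ'c1 : Z'.1.card = m) (hZ'c2 : Z'.2.card = m)
    (w1 : ∀ t, Nge t Λ.1 + (if t ≤ c then 1 else 0) = Nge t Z'.1 + (if t ≤ d then 1 else 0))
    (w2 : ∀ t, Nge t Λ.2 + (if t ≤ d then 1 else 0) = Nge t Z'.2 + (if t ≤ c then 1 else 0))
    (H : ∀ t, Nge t Z'.2 ≤ Nge (t + 1) Z.1 ∧ Nge t Z.1 ≤ Nge t Z'.2 + 1 ∧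
      Nge t Z'.1 ≤ Nge (t + 1) Z.2 + 1 ∧ Nge t Z.2 ≤ Nge t Z'.1) :
    Bm Z Λ ↔ (oRel (· > ·) (ent Z.1 (k - 1)) (some c) ∧
      oRel (· ≥ ·) (some d) (ent Z.2 (k - 1))) := by
  have hkm : k - 1 < m := by have := lt_card_of_ent hc; omega
  obtain ⟨a, ha⟩ := ent_some_of_lt (show k - 1 < Z.1.card by omega)
  have cnt1 : ∀ t, d < t → t ≤ c → Nge t Z'.1 = k := by
    intro t h1 h2
    have lo : k - 1 < Nge t Z'.1 := lt_Nge_of_ent hc h2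
    have up : Nge t Z'.1 ≤ k := by
      apply Nge_le_of_ent_lt
      intro x hx
      have hk1 : k - 1 + 1 = k := by omega
      have h5 := hZ'sh (k - 1)
      rw [hd, hk1, hx] at h5
      have : d ≥ x := h5
      omega
    omega
  have cnt2 : ∀ t, d < t → t ≤ c → Nge t Z'.2 = k - 1 := by
    intro t h1 h2
    have up : Nge t Z'.2 ≤ k - 1 := by
      apply Nge_le_of_ent_lt
      intro x hx
      rw [hd] at hx
      injection hx with hh
      omega
    rcases Nat.lt_or_ge k 2 with hk2 | hk2
    · omega
    · obtain ⟨d', hd'⟩ := ent_some_of_lt (show k - 2 < Z'.2.card by omega)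
      have hcd' : d' ≥ c := by
        have h5 := hZ'sh (k - 2)
        have e : k - 2 + 1 = k - 1 := by omega
        rw [e, hc, hd'] at h5
        exact h5
      have := lt_Nge_of_ent hd' (show t ≤ d' by omega)
      omega
  have cntL1 : ∀ t, d < t → t ≤ c → Nge t Λ.1 = k - 1 := by
    intro t h1 h2
    have hw := w1 t
    rw [if_pos h2, if_neg (by omega)] at hw
    have := cnt1 t h1 h2
    omega
  have cntL2 : ∀ t, d < t → t ≤ c → Nge t Λ.2 = k := by
    intro t h1 h2
    have hw := w2 t
    rw [if_neg (by omega), if_pos h2] at hw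
    have := cnt2 t h1 h2
    omega
  have eqout : ∀ t, ¬(d < t ∧ t ≤ c) → Nge t Λ.1 = Nge t Z'.1 ∧ Nge t Λ.2 = Nge t Z'.2 := by
    intro t ht
    constructor
    · have hw := w1 t; split_ifs at hw <;> omega
    · have hw := w2 t; split_ifs at hw <;> omega
  constructor
  · rintro ⟨-, -, hb1, hb2, hb3, hb4⟩
    have C1 : ∀ t, Nge t Λ.2 ≤ Nge (t + 1) Z.1 :=
      count_of_pointwise hrt_gt hb1 (by omega)
    have C4 : ∀ t, Nge t Z.2 ≤ Nge t Λ.1 := fun t => by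
      simpa using count_of_pointwise hrt_ge hb4 (by omega) t
    constructor
    · rw [ha]
      have h1 := C1 c
      rw [cntL2 c (by omega) le_rfl] at h1
      have h2 := (bridge ha (c + 1)).2 (by omega)
      exact (by omega : a > c)
    · cases hb : ent Z.2 (k - 1) with
      | none => trivial
      | some b =>
        show d ≥ b
        by_contra hlt
        push_neg at hlt
        have hNb : k - 1 < Nge b Z.2 := lt_Nge_of_ent hb le_rfl
        have h4 := C4 b
        rcases le_or_gt b c with hbc | hbc
        · rw [cntL1 b hlt hbc] at h4; omega
        · rw [(eqout b (by omega)).1] at h4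
          have : Nge b Z'.1 ≤ k - 1 := by
            apply Nge_le_of_ent_lt
            intro x hx
            rw [hc] at hx
            injection hx with hh
            omega
          omega
  · rintro ⟨hP1, hP2⟩
    rw [ha] at hP1
    have hac : c < a := hP1
    refine ⟨by omega, by omega, ?_, ?_, ?_, ?_⟩
    · apply pointwise_of_count hrt_gt'
      intro t
      by_cases hI : d < t ∧ t ≤ c
      · rw [cntL2 t hI.1 hI.2]
        have := lt_Nge_of_ent ha (show t + 1 ≤ a by omega)
        omega
      · rw [(eqout t hI).2]; exact (H t).1
    · apply pointwise_of_count_shift hrt_ge'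
      intro t
      simp only [Nat.add_zero]
      by_cases hI : d < t ∧ t ≤ c
      · rw [cntL2 t hI.1 hI.2]
        have := (H t).2.1
        have := cnt2 t hI.1 hI.2
        omega
      · rw [(eqout t hI).2]; exact (H t).2.1
    · apply pointwise_of_count_shift hrt_gt'
      intro t
      by_cases hI : d < t ∧ t ≤ c
      · rw [cntL1 t hI.1 hI.2]
        have := (H t).2.2.1
        have := cnt1 t hI.1 hI.2
        omega
      · rw [(eqout t hI).1]; exact (H t).2.2.1
    · apply pointwise_of_count hrt_ge'
      intro t
      simp only [Nat.add_zero]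
      by_cases hI : d < t ∧ t ≤ c
      · rw [cntL1 t hI.1 hI.2]
        cases hb : ent Z.2 (k - 1) with
        | none =>
          have hcard : Z.2.card ≤ k - 1 := by
            by_contra hcc
            push_neg at hcc
            obtain ⟨x, hx⟩ := ent_some_of_lt hcc
            rw [hb] at hx
            cases hx
          have := Nge_le_card t Z.2
          omega
        | some b =>
          rw [hb] at hP2
          have hdb : d ≥ b := hP2
          have : Nge t Z.2 ≤ k - 1 := by
            apply Nge_le_of_ent_lt
            intro x hx
            rw [hb] at hx
            injection hx with hh
            omega
          omega
      · rw [(eqout t hI).1]; exact (H t).2.2.2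

lemma heart2 {m l : ℕ} {Z Z' Λ : Symb} {c d : ℕ}
    (hl : 1 ≤ l)
    (hZc1 : Z.1.card = m + 1) (hZc2 : Z.2.card = m)
    (hΛc1 : Λ.1.card = m) (hΛc2 : Λ.2.card = m)
    (hc : ent Z'.1 l = some c) (hd : ent Z'.2 (l - 1) = some d)
    (hdc : c < d)
    (hZ'al : ∀ i, oRel (· ≥ ·) (ent Z'.1 i) (ent Z'.2 i))
    (hZ'c1 : Z'.1.card = m) (hZ'c2 : Z'.2.card = m)
    (w1 : ∀ t, Nge t Λ.1 + (if t ≤ c then 1 else 0) = Nge t Z'.1 + (if t ≤ d then 1 else 0))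
    (w2 : ∀ t, Nge t Λ.2 + (if t ≤ d then 1 else 0) = Nge t Z'.2 + (if t ≤ c then 1 else 0))
    (H : ∀ t, Nge t Z'.2 ≤ Nge (t + 1) Z.1 ∧ Nge t Z.1 ≤ Nge t Z'.2 + 1 ∧
      Nge t Z'.1 ≤ Nge (t + 1) Z.2 + 1 ∧ Nge t Z.2 ≤ Nge t Z'.1) :
    Bm Z Λ ↔ (oRel (· ≥ ·) (some c) (ent Z.1 l) ∧
      oRel (· > ·) (ent Z.2 (l - 1)) (some d)) := by
  have hlm : l < m := by have := lt_card_of_ent hc; omega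
  obtain ⟨a, ha⟩ := ent_some_of_lt (show l < Z.1.card by omega)
  obtain ⟨b, hb⟩ := ent_some_of_lt (show l - 1 < Z.2.card by omega)
  have cnt2 : ∀ t, c < t → t ≤ d → Nge t Z'.2 = l := by
    intro t h1 h2
    have e : l - 1 + 1 = l := by omega
    have lo : l - 1 < Nge t Z'.2 := lt_Nge_of_ent hd h2
    have up : Nge t Z'.2 ≤ l := by
      apply Nge_le_of_ent_lt
      intro x hx
      have h5 := hZ'al l
      rw [hc, hx] at h5
      have : c ≥ x := h5
      omega
    omega
  have cnt1 : ∀ t, c < t → t ≤ d → Nge t Z'.1 = l := by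
    intro t h1 h2
    have up : Nge t Z'.1 ≤ l := by
      apply Nge_le_of_ent_lt
      intro x hx
      rw [hc] at hx
      injection hx with hh
      omega
    obtain ⟨c', hc'⟩ := ent_some_of_lt (show l - 1 < Z'.1.card by omega)
    have hcd' : c' ≥ d := by
      have h5 := hZ'al (l - 1)
      rw [hc', hd] at h5
      exact h5
    have := lt_Nge_of_ent hc' (show t ≤ c' by omega)
    omega
  have cntL1 : ∀ t, c < t → t ≤ d → Nge t Λ.1 = l + 1 := by
    intro t h1 h2
    have hw := w1 t
    rw [if_neg (by omega), if_pos h2] at hw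
    have := cnt1 t h1 h2
    omega
  have cntL2 : ∀ t, c < t → t ≤ d → Nge t Λ.2 = l - 1 := by
    intro t h1 h2
    have hw := w2 t
    rw [if_pos h2, if_neg (by omega)] at hw
    have := cnt2 t h1 h2
    omega
  have eqout : ∀ t, ¬(c < t ∧ t ≤ d) → Nge t Λ.1 = Nge t Z'.1 ∧ Nge t Λ.2 = Nge t Z'.2 := by
    intro t ht
    constructor
    · have hw := w1 t; split_ifs at hw <;> omega
    · have hw := w2 t; split_ifs at hw <;> omega
  constructor
  · rintro ⟨-, -, hb1, hb2, hb3, hb4⟩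
    have C2 : ∀ t, Nge t Z.1 ≤ Nge t Λ.2 + 1 := fun t => by
      simpa using count_of_pointwise_shift hrt_ge hb2 (by omega) t
    have C3 : ∀ t, Nge t Λ.1 ≤ Nge (t + 1) Z.2 + 1 :=
      count_of_pointwise_shift hrt_gt hb3 (by omega)
    constructor
    · rw [ha]
      show c ≥ a
      by_contra hca
      push_neg at hca
      have hNa : l < Nge a Z.1 := lt_Nge_of_ent ha le_rfl
      have h2 := C2 a
      rcases le_or_gt a d with had | had
      · rw [cntL2 a hca had] at h2; omega
      · rw [(eqout a (by omega)).2] at h2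
        have : Nge a Z'.2 ≤ l - 1 := by
          apply Nge_le_of_ent_lt
          intro x hx
          rw [hd] at hx
          injection hx with hh
          omega
        omega
    · rw [hb]
      show b > d
      by_contra hbd
      push_neg at hbd
      have h3 := C3 d
      rw [cntL1 d hdc le_rfl] at h3
      have : Nge (d + 1) Z.2 ≤ l - 1 := by
        apply Nge_le_of_ent_lt
        intro x hx
        rw [hb] at hx
        injection hx with hh
        omega
      omega
  · rintro ⟨hP1, hP2⟩
    rw [ha] at hP1
    rw [hb] at hP2
    have hca : c ≥ a := hP1
    have hbd : b > d := hP2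
    refine ⟨by omega, by omega, ?_, ?_, ?_, ?_⟩
    · apply pointwise_of_count hrt_gt'
      intro t
      by_cases hI : c < t ∧ t ≤ d
      · rw [cntL2 t hI.1 hI.2]
        have := (H t).1
        have := cnt2 t hI.1 hI.2
        omega
      · rw [(eqout t hI).2]; exact (H t).1
    · apply pointwise_of_count_shift hrt_ge'
      intro t
      simp only [Nat.add_zero]
      by_cases hI : c < t ∧ t ≤ d
      · rw [cntL2 t hI.1 hI.2]
        have : Nge t Z.1 ≤ l := by
          apply Nge_le_of_ent_lt
          intro x hx
          rw [ha] at hx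
          injection hx with hh
          omega
        omega
      · rw [(eqout t hI).2]; exact (H t).2.1
    · apply pointwise_of_count_shift hrt_gt'
      intro t
      by_cases hI : c < t ∧ t ≤ d
      · rw [cntL1 t hI.1 hI.2]
        have := lt_Nge_of_ent hb (show t + 1 ≤ b by omega)
        omega
      · rw [(eqout t hI).1]; exact (H t).2.2.1
    · apply pointwise_of_count hrt_ge'
      intro t
      simp only [Nat.add_zero]
      by_cases hI : c < t ∧ t ≤ d
      · rw [cntL1 t hI.1 hI.2]
        have := (H t).2.2.2
        have := cnt1 t hI.1 hI.2
        omega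
      · rw [(eqout t hI).1]; exact (H t).2.2.2

lemma heart3 {m k : ℕ} {Z Z' Λ : Symb} {c d : ℕ}
    (hk : 1 ≤ k)
    (hZc1 : Z.1.card = m + 1) (hZc2 : Z.2.card = m)
    (hΛc1 : Λ.1.card = m + 1) (hΛc2 : Λ.2.card = m + 1)
    (hc : ent Z'.1 (k - 1) = some c) (hd : ent Z'.2 (k - 1) = some d)
    (hdc : d < c)
    (hZ'sh : ∀ i, oRel (· ≥ ·) (ent Z'.2 i) (ent Z'.1 (i + 1)))
    (hZ'c1 : Z'.1.card = m + 1) (hZ'c2 : Z'.2.card = m + 1)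
    (w1 : ∀ t, Nge t Λ.1 + (if t ≤ c then 1 else 0) = Nge t Z'.1 + (if t ≤ d then 1 else 0))
    (w2 : ∀ t, Nge t Λ.2 + (if t ≤ d then 1 else 0) = Nge t Z'.2 + (if t ≤ c then 1 else 0))
    (H : ∀ t, Nge t Z'.2 ≤ Nge t Z.1 ∧ Nge t Z.1 ≤ Nge (t + 1) Z'.2 + 1 ∧
      Nge t Z'.1 ≤ Nge t Z.2 + 1 ∧ Nge t Z.2 ≤ Nge (t + 1) Z'.1) :
    Bm1 Z Λ ↔ (oRel (· ≥ ·) (ent Z.1 (k - 1)) (some c) ∧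
      oRel (· > ·) (some d) (ent Z.2 (k - 1))) := by
  have hkm : k - 1 < m + 1 := by have := lt_card_of_ent hc; omega
  obtain ⟨a, ha⟩ := ent_some_of_lt (show k - 1 < Z.1.card by omega)
  have cnt1 : ∀ t, d < t → t ≤ c → Nge t Z'.1 = k := by
    intro t h1 h2
    have lo : k - 1 < Nge t Z'.1 := lt_Nge_of_ent hc h2
    have up : Nge t Z'.1 ≤ k := by
      apply Nge_le_of_ent_lt
      intro x hx
      have hk1 : k - 1 + 1 = k := by omega
      have h5 := hZ'sh (k - 1)
      rw [hd, hk1, hx] at h5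
      have : d ≥ x := h5
      omega
    omega
  have cnt2 : ∀ t, d < t → t ≤ c → Nge t Z'.2 = k - 1 := by
    intro t h1 h2
    have up : Nge t Z'.2 ≤ k - 1 := by
      apply Nge_le_of_ent_lt
      intro x hx
      rw [hd] at hx
      injection hx with hh
      omega
    rcases Nat.lt_or_ge k 2 with hk2 | hk2
    · omega
    · obtain ⟨d', hd'⟩ := ent_some_of_lt (show k - 2 < Z'.2.card by omega)
      have hcd' : d' ≥ c := by
        have h5 := hZ'sh (k - 2)
        have e : k - 2 + 1 = k - 1 := by omega
        rw [e, hc, hd'] at h5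
        exact h5
      have := lt_Nge_of_ent hd' (show t ≤ d' by omega)
      omega
  have cntL1 : ∀ t, d < t → t ≤ c → Nge t Λ.1 = k - 1 := by
    intro t h1 h2
    have hw := w1 t
    rw [if_pos h2, if_neg (by omega)] at hw
    have := cnt1 t h1 h2
    omega
  have cntL2 : ∀ t, d < t → t ≤ c → Nge t Λ.2 = k := by
    intro t h1 h2
    have hw := w2 t
    rw [if_neg (by omega), if_pos h2] at hw
    have := cnt2 t h1 h2
    omega
  have eqout : ∀ t, ¬(d < t ∧ t ≤ c) → Nge t Λ.1 = Nge t Z'.1 ∧ Nge t Λ.2 = Nge t Z'.2 := by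
    intro t ht
    constructor
    · have hw := w1 t; split_ifs at hw <;> omega
    · have hw := w2 t; split_ifs at hw <;> omega
  constructor
  · rintro ⟨-, -, hb1, hb2, hb3, hb4⟩
    have C1 : ∀ t, Nge t Λ.2 ≤ Nge t Z.1 := fun t => by
      simpa using count_of_pointwise hrt_ge hb1 (by omega) t
    have C4 : ∀ t, Nge t Z.2 ≤ Nge (t + 1) Λ.1 :=
      count_of_pointwise hrt_gt hb4 (by omega)
    constructor
    · rw [ha]
      have h1 := C1 c
      rw [cntL2 c (by omega) le_rfl] at h1
      have h2 := (bridge ha c).2 (by omega)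
      exact (by omega : a ≥ c)
    · cases hb : ent Z.2 (k - 1) with
      | none => trivial
      | some b =>
        show d > b
        by_contra hlt
        push_neg at hlt
        have hNb : k - 1 < Nge b Z.2 := lt_Nge_of_ent hb le_rfl
        have h4 := C4 b
        rcases le_or_gt (b + 1) c with hbc | hbc
        · rw [cntL1 (b + 1) (by omega) hbc] at h4; omega
        · rw [(eqout (b + 1) (by omega)).1] at h4
          have : Nge (b + 1) Z'.1 ≤ k - 1 := by
            apply Nge_le_of_ent_lt
            intro x hx
            rw [hc] at hx
            injection hx with hh
            omega
          omega
  · rintro ⟨hP1, hP2⟩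
    rw [ha] at hP1
    have hac : a ≥ c := hP1
    refine ⟨by omega, by omega, ?_, ?_, ?_, ?_⟩
    · apply pointwise_of_count hrt_ge'
      intro t
      simp only [Nat.add_zero]
      by_cases hI : d < t ∧ t ≤ c
      · rw [cntL2 t hI.1 hI.2]
        have := lt_Nge_of_ent ha (show t ≤ a by omega)
        omega
      · rw [(eqout t hI).2]; exact (H t).1
    · apply pointwise_of_count_shift hrt_gt'
      intro t
      by_cases hI : d < t + 1 ∧ t + 1 ≤ c
      · rw [cntL2 (t + 1) hI.1 hI.2]
        have := (H t).2.1
        have := cnt2 (t + 1) hI.1 hI.2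
        omega
      · rw [(eqout (t + 1) hI).2]; exact (H t).2.1
    · apply pointwise_of_count_shift hrt_ge'
      intro t
      simp only [Nat.add_zero]
      by_cases hI : d < t ∧ t ≤ c
      · rw [cntL1 t hI.1 hI.2]
        have := (H t).2.2.1
        have := cnt1 t hI.1 hI.2
        omega
      · rw [(eqout t hI).1]; exact (H t).2.2.1
    · apply pointwise_of_count hrt_gt'
      intro t
      by_cases hI : d < t + 1 ∧ t + 1 ≤ c
      · rw [cntL1 (t + 1) hI.1 hI.2]
        cases hb : ent Z.2 (k - 1) with
        | none =>
          have hcard : Z.2.card ≤ k - 1 := by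
            by_contra hcc
            push_neg at hcc
            obtain ⟨x, hx⟩ := ent_some_of_lt hcc
            rw [hb] at hx
            cases hx
          have := Nge_le_card t Z.2
          omega
        | some b =>
          rw [hb] at hP2
          have hdb : d > b := hP2
          have : Nge t Z.2 ≤ k - 1 := by
            apply Nge_le_of_ent_lt
            intro x hx
            rw [hb] at hx
            injection hx with hh
            omega
          omega
      · rw [(eqout (t + 1) hI).1]; exact (H t).2.2.2

lemma heart4 {m l : ℕ} {Z Z' Λ : Symb} {c d : ℕ}
    (hl : 1 ≤ l)
    (hZc1 : Z.1.card = m + 1) (hZc2 : Z.2.card = m)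
    (hΛc1 : Λ.1.card = m + 1) (hΛc2 : Λ.2.card = m + 1)
    (hc : ent Z'.1 l = some c) (hd : ent Z'.2 (l - 1) = some d)
    (hdc : c < d)
    (hZ'al : ∀ i, oRel (· ≥ ·) (ent Z'.1 i) (ent Z'.2 i))
    (hZ'c1 : Z'.1.card = m + 1) (hZ'c2 : Z'.2.card = m + 1)
    (w1 : ∀ t, Nge t Λ.1 + (if t ≤ c then 1 else 0) = Nge t Z'.1 + (if t ≤ d then 1 else 0))
    (w2 : ∀ t, Nge t Λ.2 + (if t ≤ d then 1 else 0) = Nge t Z'.2 + (if t ≤ c then 1 else 0))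
    (H : ∀ t, Nge t Z'.2 ≤ Nge t Z.1 ∧ Nge t Z.1 ≤ Nge (t + 1) Z'.2 + 1 ∧
      Nge t Z'.1 ≤ Nge t Z.2 + 1 ∧ Nge t Z.2 ≤ Nge (t + 1) Z'.1) :
    Bm1 Z Λ ↔ (oRel (· > ·) (some c) (ent Z.1 l) ∧
      oRel (· ≥ ·) (ent Z.2 (l - 1)) (some d)) := by
  have hlm : l < m + 1 := by have := lt_card_of_ent hc; omega
  obtain ⟨a, ha⟩ := ent_some_of_lt (show l < Z.1.card by omega)
  obtain ⟨b, hb⟩ := ent_some_of_lt (show l - 1 < Z.2.card by omega)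
  have cnt2 : ∀ t, c < t → t ≤ d → Nge t Z'.2 = l := by
    intro t h1 h2
    have lo : l - 1 < Nge t Z'.2 := lt_Nge_of_ent hd h2
    have up : Nge t Z'.2 ≤ l := by
      apply Nge_le_of_ent_lt
      intro x hx
      have h5 := hZ'al l
      rw [hc, hx] at h5
      have : c ≥ x := h5
      omega
    omega
  have cnt1 : ∀ t, c < t → t ≤ d → Nge t Z'.1 = l := by
    intro t h1 h2
    have up : Nge t Z'.1 ≤ l := by
      apply Nge_le_of_ent_lt
      intro x hx
      rw [hc] at hx
      injection hx with hh
      omega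
    obtain ⟨c', hc'⟩ := ent_some_of_lt (show l - 1 < Z'.1.card by omega)
    have hcd' : c' ≥ d := by
      have h5 := hZ'al (l - 1)
      rw [hc', hd] at h5
      exact h5
    have := lt_Nge_of_ent hc' (show t ≤ c' by omega)
    omega
  have cntL1 : ∀ t, c < t → t ≤ d → Nge t Λ.1 = l + 1 := by
    intro t h1 h2
    have hw := w1 t
    rw [if_neg (by omega), if_pos h2] at hw
    have := cnt1 t h1 h2
    omega
  have cntL2 : ∀ t, c < t → t ≤ d → Nge t Λ.2 = l - 1 := by
    intro t h1 h2
    have hw := w2 t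
    rw [if_pos h2, if_neg (by omega)] at hw
    have := cnt2 t h1 h2
    omega
  have eqout : ∀ t, ¬(c < t ∧ t ≤ d) → Nge t Λ.1 = Nge t Z'.1 ∧ Nge t Λ.2 = Nge t Z'.2 := by
    intro t ht
    constructor
    · have hw := w1 t; split_ifs at hw <;> omega
    · have hw := w2 t; split_ifs at hw <;> omega
  constructor
  · rintro ⟨-, -, hb1, hb2, hb3, hb4⟩
    have C2 : ∀ t, Nge t Z.1 ≤ Nge (t + 1) Λ.2 + 1 :=
      count_of_pointwise_shift hrt_gt hb2 (by omega)
    have C3 : ∀ t, Nge t Λ.1 ≤ Nge t Z.2 + 1 := fun t => by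
      simpa using count_of_pointwise_shift hrt_ge hb3 (by omega) t
    constructor
    · rw [ha]
      show c > a
      by_contra hca
      push_neg at hca
      have hNa : l < Nge a Z.1 := lt_Nge_of_ent ha le_rfl
      have h2 := C2 a
      rcases le_or_gt (a + 1) d with had | had
      · rw [cntL2 (a + 1) (by omega) had] at h2; omega
      · rw [(eqout (a + 1) (by omega)).2] at h2
        have : Nge (a + 1) Z'.2 ≤ l - 1 := by
          apply Nge_le_of_ent_lt
          intro x hx
          rw [hd] at hx
          injection hx with hh
          omega
        omega
    · rw [hb]
      show b ≥ d
      by_contra hbd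
      push_neg at hbd
      have h3 := C3 d
      rw [cntL1 d hdc le_rfl] at h3
      have : Nge d Z.2 ≤ l - 1 := by
        apply Nge_le_of_ent_lt
        intro x hx
        rw [hb] at hx
        injection hx with hh
        omega
      omega
  · rintro ⟨hP1, hP2⟩
    rw [ha] at hP1
    rw [hb] at hP2
    have hca : c > a := hP1
    have hbd : b ≥ d := hP2
    refine ⟨by omega, by omega, ?_, ?_, ?_, ?_⟩
    · apply pointwise_of_count hrt_ge'
      intro t
      simp only [Nat.add_zero]
      by_cases hI : c < t ∧ t ≤ d
      · rw [cntL2 t hI.1 hI.2]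
        have := (H t).1
        have := cnt2 t hI.1 hI.2
        omega
      · rw [(eqout t hI).2]; exact (H t).1
    · apply pointwise_of_count_shift hrt_gt'
      intro t
      by_cases hI : c < t + 1 ∧ t + 1 ≤ d
      · rw [cntL2 (t + 1) hI.1 hI.2]
        have : Nge t Z.1 ≤ l := by
          apply Nge_le_of_ent_lt
          intro x hx
          rw [ha] at hx
          injection hx with hh
          omega
        omega
      · rw [(eqout (t + 1) hI).2]; exact (H t).2.1
    · apply pointwise_of_count_shift hrt_ge'
      intro t
      simp only [Nat.add_zero]
      by_cases hI : c < t ∧ t ≤ d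
      · rw [cntL1 t hI.1 hI.2]
        have := lt_Nge_of_ent hb (show t ≤ b by omega)
        omega
      · rw [(eqout t hI).1]; exact (H t).2.2.1
    · apply pointwise_of_count hrt_gt'
      intro t
      by_cases hI : c < t + 1 ∧ t + 1 ≤ d
      · rw [cntL1 (t + 1) hI.1 hI.2]
        have := (H t).2.2.2
        have := cnt1 (t + 1) hI.1 hI.2
        omega
      · rw [(eqout (t + 1) hI).1]; exact (H t).2.2.2

theorem stmt0 (m m' : ℕ) (Z Z' : Symb) (hm : m' = m ∨ m' = m + 1)
    (hZ : IsSpecial1 Z m) (hZ' : IsSpecial0 Z' m')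
    (hD : ∃ A A' : Symb, DRel Z Z' m m' A A')
    (k l : ℕ) (hk : 1 ≤ k) (hl : 1 ≤ l) (hkl : l = k ∨ l + 1 = k)
    (c d : ℕ) (hc : ent Z'.1 (k - 1) = some c) (hd : ent Z'.2 (l - 1) = some d)
    (hcons : ConsecPair Z' c d) :
    DRel Z Z' m m' Z (lam Z' ({c}, {d})) ↔
      ((m' = m ∧ l = k ∧
          oRel (· > ·) (ent Z.1 (k - 1)) (some c) ∧
          oRel (· ≥ ·) (some d) (ent Z.2 (k - 1))) ∨
       (m' = m ∧ l + 1 = k ∧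
          oRel (· ≥ ·) (some c) (ent Z.1 (k - 1)) ∧
          oRel (· > ·) (ent Z.2 (l - 1)) (some d)) ∨
       (m' = m + 1 ∧ l = k ∧
          oRel (· ≥ ·) (ent Z.1 (k - 1)) (some c) ∧
          oRel (· > ·) (some d) (ent Z.2 (k - 1))) ∨
       (m' = m + 1 ∧ l + 1 = k ∧
          oRel (· > ·) (some c) (ent Z.1 (k - 1)) ∧
          oRel (· ≥ ·) (ent Z.2 (l - 1)) (some d))) := by
  obtain ⟨hZc1, hZc2, hZal, hZsh⟩ := hZ
  obtain ⟨hZ'c1, hZ'c2, hZ'al, hZ'sh⟩ := hZ'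
  obtain ⟨hcc0, hdd0, -⟩ := hcons
  rw [Finset.mem_sdiff] at hcc0 hdd0
  set Λ : Symb := lam Z' ({c}, {d}) with hΛdef
  have hΛ1 : Λ.1 = (Z'.1 \ {c}) ∪ {d} := rfl
  have hΛ2 : Λ.2 = (Z'.2 \ {d}) ∪ {c} := rfl
  have cΛ1 : Λ.1.card = m' := by rw [hΛ1, card_swap hcc0.1 hdd0.2, hZ'c1]
  have cΛ2 : Λ.2.card = m' := by rw [hΛ2, card_swap hdd0.1 hcc0.2, hZ'c2]
  have w1 : ∀ t, Nge t Λ.1 + (if t ≤ c then 1 else 0)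
      = Nge t Z'.1 + (if t ≤ d then 1 else 0) := fun t => by
    rw [hΛ1]; exact Nge_swap hcc0.1 hdd0.2 t
  have w2 : ∀ t, Nge t Λ.2 + (if t ≤ d then 1 else 0)
      = Nge t Z'.2 + (if t ≤ c then 1 else 0) := fun t => by
    rw [hΛ2]; exact Nge_swap hdd0.1 hcc0.2 t
  have sZ : ∀ t, Nge t Z.2 ≤ Nge t Z.1 ∧ Nge t Z.1 ≤ Nge t Z.2 + 1 := fun t =>
    special_counts hZal hZsh (by omega) (by omega) t
  have sZ' : ∀ t, Nge t Z'.2 ≤ Nge t Z'.1 ∧ Nge t Z'.1 ≤ Nge t Z'.2 + 1 := fun t =>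
    special_counts hZ'al hZ'sh (by omega) (by omega) t
  have hSbZ : Z ∈ Sbar Z :=
    ⟨(∅, ∅), ⟨Finset.empty_subset _, Finset.empty_subset _⟩, by simp [lam]⟩
  have hSbΛ : Λ ∈ Sbar Z' :=
    ⟨({c}, {d}), ⟨Finset.singleton_subset_iff.2 (Finset.mem_sdiff.2 hcc0),
      Finset.singleton_subset_iff.2 (Finset.mem_sdiff.2 hdd0)⟩, rfl⟩
  obtain ⟨A, A', ⟨⟨MA, hMA, hAeq⟩, hA'Sb, hBB⟩, hAc1, hAc2, hAc3, hAc4⟩ := hD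
  obtain ⟨MA', hMA', hA'eq⟩ := hA'Sb
  rcases hm with hm | hm
  · have hm2 := hm.symm
    subst hm2
    have hBm : Bm A A' := by
      rcases hBB with ⟨-, h⟩ | ⟨habs, -⟩
      · exact h
      · omega
    have H := fun t => lemA_m sZ sZ' hMA hAeq hMA' hA'eq hBm hAc1 hAc2
      (by omega) (by omega) t
    have hDiff : DRel Z Z' m m Z Λ ↔ Bm Z Λ := by
      constructor
      · rintro ⟨⟨-, -, hor⟩, -, -, -, -⟩
        rcases hor with ⟨-, h⟩ | ⟨habs, -⟩
        · exact h
        · omega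
      · intro hB
        exact ⟨⟨hSbZ, hSbΛ, Or.inl ⟨rfl, hB⟩⟩, hZc1, hZc2, cΛ1, cΛ2⟩
    rw [hDiff]
    rcases hkl with hlk | hlk
    · subst l
      have hdc : d < c := by
        have h5 := hZ'al (k - 1)
        rw [hc, hd] at h5
        have h6 : c ≥ d := h5
        have h7 : c ≠ d := fun he => hcc0.2 (he ▸ hdd0.1)
        omega
      rw [heart1 hk hZc1 hZc2 cΛ1 cΛ2 hc hd hdc hZ'al hZ'sh hZ'c1 hZ'c2 w1 w2 H]
      constructor
      · rintro ⟨p1, p2⟩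
        exact Or.inl ⟨rfl, rfl, p1, p2⟩
      · rintro (⟨-, -, p1, p2⟩ | ⟨-, habs, -⟩ | ⟨habs, -⟩ | ⟨habs, -⟩)
        · exact ⟨p1, p2⟩
        · omega
        · omega
        · omega
    · subst k
      simp only [Nat.add_sub_cancel] at hc ⊢
      have hdc : c < d := by
        have h5 := hZ'sh (l - 1)
        have e : l - 1 + 1 = l := by omega
        rw [e, hd, hc] at h5
        have h6 : d ≥ c := h5
        have h7 : c ≠ d := fun he => hcc0.2 (he ▸ hdd0.1)
        omega
      rw [heart2 hl hZc1 hZc2 cΛ1 cΛ2 hc hd hdc hZ'al hZ'c1 hZ'c2 w1 w2 H]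
      constructor
      · rintro ⟨p1, p2⟩
        exact Or.inr (Or.inl ⟨by trivial, by trivial, p1, p2⟩)
      · rintro (⟨-, habs, -⟩ | ⟨-, -, p1, p2⟩ | ⟨habs, -⟩ | ⟨habs, -⟩)
        · omega
        · exact ⟨p1, p2⟩
        · omega
        · omega
  · have hm2 := hm.symm
    subst hm2
    have hBm : Bm1 A A' := by
      rcases hBB with ⟨habs, -⟩ | ⟨-, h⟩
      · omega
      · exact h
    have H := fun t => lemA_m1 sZ sZ' hMA hAeq hMA' hA'eq hBm hAc1 hAc2
      (by omega) (by omega) t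
    have hDiff : DRel Z Z' m (m + 1) Z Λ ↔ Bm1 Z Λ := by
      constructor
      · rintro ⟨⟨-, -, hor⟩, -, -, -, -⟩
        rcases hor with ⟨habs, -⟩ | ⟨-, h⟩
        · omega
        · exact h
      · intro hB
        exact ⟨⟨hSbZ, hSbΛ, Or.inr ⟨rfl, hB⟩⟩, hZc1, hZc2, cΛ1, cΛ2⟩
    rw [hDiff]
    rcases hkl with hlk | hlk
    · subst l
      have hdc : d < c := by
        have h5 := hZ'al (k - 1)
        rw [hc, hd] at h5
        have h6 : c ≥ d := h5
        have h7 : c ≠ d := fun he => hcc0.2 (he ▸ hdd0.1)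
        omega
      rw [heart3 hk hZc1 hZc2 cΛ1 cΛ2 hc hd hdc hZ'sh hZ'c1 hZ'c2 w1 w2 H]
      constructor
      · rintro ⟨p1, p2⟩
        exact Or.inr (Or.inr (Or.inl ⟨rfl, rfl, p1, p2⟩))
      · rintro (⟨habs, -⟩ | ⟨habs, -⟩ | ⟨-, -, p1, p2⟩ | ⟨-, habs, -⟩)
        · omega
        · omega
        · exact ⟨p1, p2⟩
        · omega
    · subst k
      simp only [Nat.add_sub_cancel] at hc ⊢
      have hdc : c < d := by
        have h5 := hZ'sh (l - 1)
        have e : l - 1 + 1 = l := by omega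
        rw [e, hd, hc] at h5
        have h6 : d ≥ c := h5
        have h7 : c ≠ d := fun he => hcc0.2 (he ▸ hdd0.1)
        omega
      rw [heart4 hl hZc1 hZc2 cΛ1 cΛ2 hc hd hdc hZ'al hZ'c1 hZ'c2 w1 w2 H]
      constructor
      · rintro ⟨p1, p2⟩
        exact Or.inr (Or.inr (Or.inr ⟨by trivial, by trivial, p1, p2⟩))
      · rintro (⟨habs, -⟩ | ⟨habs, -⟩ | ⟨-, habs, -⟩ | ⟨-, -, p1, p2⟩)
        · omega
        · omega
        · omega
        · exact ⟨p1, p2⟩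
end

section
/- Let Z be a special symbol of defect 1 and size (m+1,m) and Z' a special symbol of defect 0 and size (m',m') with m' = m or m' = m+1, and suppose D_{Z,Z'} ≠ ∅. Let Ψ = {a_k, b_l} be a consecutive pair in Z_I (so l = k or l = k−1). Then (Λ_Ψ, Z') ∈ D_{Z,Z'} if and only if: c_k ≥ a_k and b_k > d_k, when m' = m and l = k; a_k > c_k and d_{k−1} ≥ b_{k−1}, when m' = m and l = k−1; c_k > a_k and b_k ≥ d_k, when m' = m+1 and l = k; a_k ≥ c_k and d_{k−1} > b_{k−1}, when m' = m+1 and l = k−1. (Here a_i, b_i are the rows of Z and c_i, d_i the rows of Z'.) -/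
open scoped symmDiff

namespace S1

def cnt (t : ℕ) (S : Finset ℕ) : ℕ := (S.filter (fun x => t < x)).card

lemma rowList_pairwise (S : Finset ℕ) : (rowList S).Pairwise (· > ·) := by
  rw [rowList, List.pairwise_reverse]
  exact (Finset.sortedLT_sort S).pairwise

lemma rowList_length (S : Finset ℕ) : (rowList S).length = S.card := by
  rw [rowList, List.length_reverse, Finset.length_sort]

lemma mem_rowList {S : Finset ℕ} {x : ℕ} : x ∈ rowList S ↔ x ∈ S := by
  rw [rowList, List.mem_reverse, Finset.mem_sort]

lemma cnt_eq_countP (t : ℕ) (S : Finset ℕ) :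
    cnt t S = (rowList S).countP (fun y => decide (t < y)) := by
  have h1 : (rowList S).countP (fun y => decide (t < y))
      = (S.sort (· ≤ ·)).countP (fun y => decide (t < y)) :=
    (List.reverse_perm _).countP_eq _
  have h2 : (S.sort (· ≤ ·)).countP (fun y => decide (t < y))
      = S.toList.countP (fun y => decide (t < y)) :=
    (Finset.sort_perm_toList _ _).countP_eq _
  rw [h1, h2, cnt, Finset.card, Finset.filter_val, ← Multiset.countP_eq_card_filter,
    ← Finset.coe_toList S, Multiset.coe_countP]

lemma list_GT {l : List ℕ} (hl : l.Pairwise (· > ·)) :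
    ∀ {i x : ℕ}, l[i]? = some x → ∀ t : ℕ, (i + 1 ≤ l.countP (fun y => decide (t < y)) ↔ t < x) := by
  induction l with
  | nil => intro i x hx; simp at hx
  | cons a l ih =>
    rcases List.pairwise_cons.mp hl with ⟨ha, hl'⟩
    intro i x hx t
    cases i with
    | zero =>
      simp only [List.getElem?_cons_zero, Option.some.injEq] at hx
      subst hx
      rw [List.countP_cons]
      constructor
      · intro h
        by_contra hta
        push_neg at hta
        have h0 : l.countP (fun y => decide (t < y)) = 0 := by
          rw [List.countP_eq_zero]
          intro b hb
          have := ha b hb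
          simp only [decide_eq_true_eq]
          omega
        have h1 : decide (t < a) = false := by simp only [decide_eq_false_iff_not]; omega
        rw [h0, h1] at h
        simp at h
      · intro h
        have h1 : decide (t < a) = true := by simp only [decide_eq_true_eq]; omega
        rw [h1]
        simp
    | succ i =>
      simp only [List.getElem?_cons_succ] at hx
      have hmem : x ∈ l := List.mem_of_getElem? hx
      have hax : a > x := ha x hmem
      rw [List.countP_cons]
      constructor
      · intro h
        have hle : i + 1 ≤ l.countP (fun y => decide (t < y)) := by
          split at h <;> omega
        exact (ih hl' hx t).mp hle
      · intro h
        have h1 : i + 1 ≤ l.countP (fun y => decide (t < y)) := (ih hl' hx t).mpr h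
        have h2 : decide (t < a) = true := by simp only [decide_eq_true_eq]; omega
        have h3 : (if decide (t < a) = true then 1 else 0) = 1 := by rw [h2]; simp
        omega

/-- Core counting lemma: if `x` is the `i`-th largest element of `S`, then `S` has at
least `i+1` elements above `t` iff `x > t`. -/
lemma GT {S : Finset ℕ} {i x : ℕ} (hx : ent S i = some x) (t : ℕ) :
    i + 1 ≤ cnt t S ↔ t < x := by
  rw [cnt_eq_countP]
  exact list_GT (rowList_pairwise S) hx t

lemma entE {S : Finset ℕ} {i x : ℕ} (hx : ent S i = some x) : x ∈ S :=
  mem_rowList.mp (List.mem_of_getElem? hx)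

lemma ent_none {S : Finset ℕ} {i : ℕ} : ent S i = none ↔ S.card ≤ i := by
  rw [ent, List.getElem?_eq_none_iff, rowList_length]

lemma ent_lt_card {S : Finset ℕ} {i x : ℕ} (hx : ent S i = some x) : i < S.card := by
  by_contra h
  rw [ent, List.getElem?_eq_none_iff.mpr (by rw [rowList_length]; omega)] at hx
  cases hx

lemma ent_isSome {S : Finset ℕ} {i : ℕ} (h : i < S.card) : ∃ x, ent S i = some x := by
  cases hx : ent S i with
  | none => rw [ent_none] at hx; omega
  | some x => exact ⟨x, rfl⟩

lemma cnt_le_card (t : ℕ) (S : Finset ℕ) : cnt t S ≤ S.card :=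
  Finset.card_filter_le _ _

lemma pos_of_ent {S : Finset ℕ} {i x : ℕ} (hx : ent S i = some x) : cnt x S = i := by
  have h1 : ¬ (i + 1 ≤ cnt x S) := by rw [GT hx]; omega
  rcases Nat.eq_zero_or_pos i with hi | hi
  · omega
  · obtain ⟨y, hy⟩ := ent_isSome (S := S) (i := i - 1) (by have := ent_lt_card hx; omega)
    have hyx : x < y := by
      have hp := rowList_pairwise S
      rw [List.pairwise_iff_getElem] at hp
      have hli : i < (rowList S).length := by rw [rowList_length]; exact ent_lt_card hx
      have hgi : (rowList S)[i - 1]'(by omega) = y := by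
        have := hy; rw [ent, List.getElem?_eq_getElem (by omega)] at this
        exact Option.some.injEq _ _ ▸ (by simpa using this)
      have hgx : (rowList S)[i]'(hli) = x := by
        have := hx; rw [ent, List.getElem?_eq_getElem hli] at this
        simpa using this
      have := hp (i - 1) i (by omega) hli (by omega)
      rw [hgi, hgx] at this
      exact this
    have h2 : (i - 1) + 1 ≤ cnt x S := (GT hy x).mpr hyx
    omega

lemma ent_of_pos {S : Finset ℕ} {x : ℕ} (hx : x ∈ S) : ent S (cnt x S) = some x := by
  obtain ⟨i, hi⟩ := List.getElem?_of_mem (mem_rowList.mpr hx)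
  have : ent S i = some x := hi
  rw [pos_of_ent this]
  exact this

lemma cnt_succ_le {S : Finset ℕ} {s t : ℕ} (hs : s ∈ S) (h : t < s) :
    cnt s S + 1 ≤ cnt t S := (GT (ent_of_pos hs) t).mpr h

lemma cnt_mono {t u : ℕ} (S : Finset ℕ) (h : t ≤ u) : cnt u S ≤ cnt t S := by
  apply Finset.card_le_card
  intro x hx
  rw [Finset.mem_filter] at hx ⊢
  exact ⟨hx.1, by omega⟩

lemma cnt_lt_card_of_mem {S : Finset ℕ} {t : ℕ} (h : t ∈ S) : cnt t S < S.card :=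
  ent_lt_card (ent_of_pos h)

lemma exists_ent_of_cnt {S : Finset ℕ} {t j : ℕ} (h : j + 1 ≤ cnt t S) :
    ∃ x, ent S j = some x ∧ t < x := by
  obtain ⟨x, hx⟩ := ent_isSome (S := S) (i := j) (by have := cnt_le_card t S; omega)
  exact ⟨x, hx, (GT hx t).mp h⟩


lemma oRel_weaken {x y : Option ℕ} (h : oRel (· > ·) x y) : oRel (· ≥ ·) x y := by
  cases x with
  | none => cases y <;> trivial
  | some a => cases y with
    | none => trivial
    | some b => exact le_of_lt h

/-- Weak interlacing gives counting bounds at every threshold. -/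
lemma W {S T : Finset ℕ} (hTS : T.card ≤ S.card) (hST : S.card ≤ T.card + 1)
    (h1 : ∀ i, oRel (· ≥ ·) (ent S i) (ent T i))
    (h2 : ∀ i, oRel (· ≥ ·) (ent T i) (ent S (i + 1))) (t : ℕ) :
    cnt t T ≤ cnt t S ∧ cnt t S ≤ cnt t T + 1 := by
  constructor
  · rcases Nat.eq_zero_or_pos (cnt t T) with h0 | h0
    · omega
    · obtain ⟨x, hx, htx⟩ := exists_ent_of_cnt (S := T) (t := t) (j := cnt t T - 1) (by omega)
      obtain ⟨s, hs⟩ := ent_isSome (S := S) (i := cnt t T - 1)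
        (by have := cnt_le_card t T; omega)
      have hsx := h1 (cnt t T - 1)
      rw [hx, hs] at hsx
      have hsx' : x ≤ s := hsx
      have : t < s := by omega
      have := (GT hs t).mpr this
      omega
  · by_contra hcon
    push_neg at hcon
    obtain ⟨s', hs', hts'⟩ := exists_ent_of_cnt (S := S) (t := t) (j := cnt t T + 1) (by omega)
    have := h2 (cnt t T)
    rw [hs'] at this
    cases hT : ent T (cnt t T) with
    | none =>
      rw [ent_none] at hT
      have := cnt_le_card t S
      omega
    | some x' =>
      rw [hT] at this
      have h' : s' ≤ x' := this
      have : t < x' := by omega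
      have := (GT hT t).mpr this
      omega

/-- Strict-over-weak interlacing: exact count at elements of `T`. -/
lemma T1 {S T : Finset ℕ} (hc : T.card < S.card)
    (h1 : ∀ i, oRel (· > ·) (ent S i) (ent T i))
    (h2 : ∀ i, oRel (· ≥ ·) (ent T i) (ent S (i + 1)))
    {t : ℕ} (ht : t ∈ T) : cnt t S = cnt t T + 1 := by
  set j := cnt t T with hj
  have hentT : ent T j = some t := ent_of_pos ht
  have hjT : j < T.card := cnt_lt_card_of_mem ht
  obtain ⟨s, hs⟩ := ent_isSome (S := S) (i := j) (by omega)
  have hst := h1 j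
  rw [hs, hentT] at hst
  have hst' : t < s := hst
  have hlow : j + 1 ≤ cnt t S := (GT hs t).mpr hst' 
  have hup : cnt t S ≤ j + 1 := by
    have := h2 j
    rw [hentT] at this
    cases hS : ent S (j + 1) with
    | none => rw [ent_none] at hS; have := cnt_le_card t S; omega
    | some s' =>
      rw [hS] at this
      have h' : s' ≤ t := this
      have : ¬ (j + 1 + 1 ≤ cnt t S) := by rw [GT hS]; omega
      omega
  omega

/-- Weak-over-strict interlacing: exact count at elements of `S`. -/
lemma T2 {S T : Finset ℕ} (hc : S.card ≤ T.card + 1)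
    (h1 : ∀ i, oRel (· ≥ ·) (ent S i) (ent T i))
    (h2 : ∀ i, oRel (· > ·) (ent T i) (ent S (i + 1)))
    {t : ℕ} (ht : t ∈ S) : cnt t T = cnt t S := by
  set j := cnt t S with hj
  have hentS : ent S j = some t := ent_of_pos ht
  have hjS : j < S.card := cnt_lt_card_of_mem ht
  have hup : cnt t T ≤ j := by
    have := h1 j
    rw [hentS] at this
    cases hT : ent T j with
    | none => rw [ent_none] at hT; have := cnt_le_card t T; omega
    | some x =>
      rw [hT] at this
      have h' : x ≤ t := this
      have : ¬ (j + 1 ≤ cnt t T) := by rw [GT hT]; omega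
      omega
  have hlow : j ≤ cnt t T := by
    rcases Nat.eq_zero_or_pos j with h0 | h0
    · omega
    · obtain ⟨x, hx⟩ := ent_isSome (S := T) (i := j - 1) (by omega)
      have := h2 (j - 1)
      rw [hx] at this
      rw [show j - 1 + 1 = j by omega, hentS] at this
      have h' : t < x := this
      have := (GT hx t).mpr h'
      omega
  omega

/-- Converse of `T1`: exact counts give strict-over-weak interlacing. -/
lemma C1 {S T : Finset ℕ} (h : ∀ t ∈ T, cnt t S = cnt t T + 1) :
    (∀ i, oRel (· > ·) (ent S i) (ent T i)) ∧
      (∀ i, oRel (· ≥ ·) (ent T i) (ent S (i + 1))) := by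
  constructor
  · intro i
    cases hS : ent S i with
    | none => trivial
    | some s =>
      cases hT : ent T i with
      | none => trivial
      | some x =>
        show x < s
        have hx : cnt x T = i := pos_of_ent hT
        have := h x (entE hT)
        rw [← GT hS]
        omega
  · intro i
    cases hT : ent T i with
    | none => trivial
    | some x =>
      cases hS : ent S (i + 1) with
      | none => trivial
      | some s'
      =>
      show s' ≤ x
      have hx : cnt x T = i := pos_of_ent hT
      have := h x (entE hT)
      have : ¬ (i + 1 + 1 ≤ cnt x S) := by omega
      rw [GT hS] at this
      omega

/-- Converse of `T2`: exact counts give weak-over-strict interlacing. -/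
lemma C2 {S T : Finset ℕ} (h : ∀ t ∈ S, cnt t T = cnt t S) :
    (∀ i, oRel (· ≥ ·) (ent S i) (ent T i)) ∧
      (∀ i, oRel (· > ·) (ent T i) (ent S (i + 1))) := by
  constructor
  · intro i
    cases hS : ent S i with
    | none => trivial
    | some s =>
      cases hT : ent T i with
      | none => trivial
      | some x =>
        show x ≤ s
        have hs : cnt s S = i := pos_of_ent hS
        have := h s (entE hS)
        have : ¬ (i + 1 ≤ cnt s T) := by omega
        rw [GT hT] at this
        omega
  · intro i
    cases hT : ent T i with
    | none => trivial
    | some x =>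
      cases hS : ent S (i + 1) with
      | none => trivial
      | some s' =>
        show s' < x
        have hs : cnt s' S = i + 1 := pos_of_ent hS
        have := h s' (entE hS)
        have : i + 1 ≤ cnt s' T := by omega
        rw [GT hT] at this
        omega

/-- If the counts agree at `t ∈ T` for a weakly interlaced pair then `t` also lies in `S`. -/
lemma D1a {S T : Finset ℕ} (hTS : T.card ≤ S.card)
    (h1 : ∀ i, oRel (· ≥ ·) (ent S i) (ent T i))
    {t : ℕ} (ht : t ∈ T) (he : cnt t S = cnt t T) : t ∈ S := by
  set j := cnt t T with hj
  have hjT : j < T.card := cnt_lt_card_of_mem ht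
  obtain ⟨s, hs⟩ := ent_isSome (S := S) (i := j) (by omega)
  have := h1 j
  rw [hs, ent_of_pos ht] at this
  have h' : t ≤ s := this
  have hle : ¬ (j + 1 ≤ cnt t S) := by omega
  rw [GT hs] at hle
  have : s = t := by omega
  exact this ▸ entE hs

/-- If the count in `S` exceeds that in `T` by one at `t ∈ S`, then `t ∈ T`. -/
lemma D1b {S T : Finset ℕ} (hc : S.card ≤ T.card + 1)
    (h2 : ∀ i, oRel (· ≥ ·) (ent T i) (ent S (i + 1)))
    {t : ℕ} (ht : t ∈ S) (he : cnt t S = cnt t T + 1) : t ∈ T := by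
  set j := cnt t S with hj
  have hjS : j < S.card := cnt_lt_card_of_mem ht
  obtain ⟨x, hx⟩ := ent_isSome (S := T) (i := j - 1) (by omega)
  have := h2 (j - 1)
  rw [hx, show j - 1 + 1 = j by omega, ent_of_pos ht] at this
  have h' : t ≤ x := this
  have hle : ¬ (j - 1 + 1 ≤ cnt t T) := by omega
  rw [GT hx] at hle
  have : x = t := by omega
  exact this ▸ entE hx


lemma cnt_union_disjoint {s u : Finset ℕ} (h : Disjoint s u) (t : ℕ) :
    cnt t (s ∪ u) = cnt t s + cnt t u := by
  rw [cnt, cnt, cnt, Finset.filter_union]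
  exact Finset.card_union_of_disjoint (Finset.disjoint_filter_filter h)

lemma cnt_sdiff_add {u s : Finset ℕ} (h : u ⊆ s) (t : ℕ) :
    cnt t (s \ u) + cnt t u = cnt t s := by
  rw [← cnt_union_disjoint (Finset.sdiff_disjoint) t, Finset.sdiff_union_of_subset h]

lemma cnt_singleton (t x : ℕ) : cnt t ({x} : Finset ℕ) = if t < x then 1 else 0 := by
  rw [cnt, Finset.filter_singleton]
  split <;> simp

lemma cnt_swap {s : Finset ℕ} {x y : ℕ} (hx : x ∈ s) (hy : y ∉ s) (t : ℕ) :
    cnt t ((s \ {x}) ∪ {y}) + (if t < x then 1 else 0)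
      = cnt t s + (if t < y then 1 else 0) := by
  have hd : Disjoint (s \ {x}) ({y} : Finset ℕ) := by
    rw [Finset.disjoint_singleton_right, Finset.mem_sdiff]
    intro h
    exact hy h.1
  rw [cnt_union_disjoint hd, cnt_singleton,
    ← cnt_sdiff_add (Finset.singleton_subset_iff.mpr hx) t, cnt_singleton]
  ring

lemma card_swap {s : Finset ℕ} {x y : ℕ} (hx : x ∈ s) (hy : y ∉ s) :
    ((s \ {x}) ∪ {y}).card = s.card := by
  have hd : Disjoint (s \ {x}) ({y} : Finset ℕ) := by
    rw [Finset.disjoint_singleton_right, Finset.mem_sdiff]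
    intro h
    exact hy h.1
  rw [Finset.card_union_of_disjoint hd,
    Finset.card_sdiff_of_subset (Finset.singleton_subset_iff.mpr hx), Finset.card_singleton]
  have h0 : ({y} : Finset ℕ).card = 1 := Finset.card_singleton y
  have : 1 ≤ s.card := Finset.card_pos.mpr ⟨x, hx⟩
  omega

lemma lam_cnt {Z M : Symb} (hM : SubZI M Z) (t : ℕ) :
    cnt t (lam Z M).1 + cnt t (lam Z M).2 = cnt t Z.1 + cnt t Z.2 := by
  obtain ⟨h1, h2⟩ := hM
  have hM1 : M.1 ⊆ Z.1 := h1.trans Finset.sdiff_subset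
  have hM2 : M.2 ⊆ Z.2 := h2.trans Finset.sdiff_subset
  have hd1 : Disjoint (Z.1 \ M.1) M.2 := by
    apply Finset.disjoint_left.mpr
    intro x hx1 hx2
    exact (Finset.mem_sdiff.mp (h2 hx2)).2 (Finset.mem_sdiff.mp hx1).1
  have hd2 : Disjoint (Z.2 \ M.2) M.1 := by
    apply Finset.disjoint_left.mpr
    intro x hx1 hx2
    exact (Finset.mem_sdiff.mp (h1 hx2)).2 (Finset.mem_sdiff.mp hx1).1
  have e1 := cnt_union_disjoint hd1 t
  have e2 := cnt_union_disjoint hd2 t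
  have e3 := cnt_sdiff_add hM1 t
  have e4 := cnt_sdiff_add hM2 t
  simp only [lam]
  omega

lemma lam_mem_union {Z M : Symb} (hM : SubZI M Z) {t : ℕ} (ht : t ∈ Z.1 ∪ Z.2) :
    t ∈ (lam Z M).1 ∪ (lam Z M).2 := by
  obtain ⟨h1, h2⟩ := hM
  simp only [lam, Finset.mem_union, Finset.mem_sdiff] at *
  rcases ht with ht | ht
  · by_cases hm : t ∈ M.1
    · right; right; exact hm
    · left; left; exact ⟨ht, hm⟩
  · by_cases hm : t ∈ M.2
    · left; right; exact hm
    · right; left; exact ⟨ht, hm⟩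

lemma lam_mem_deg {Z M : Symb} (hM : SubZI M Z) {t : ℕ} (ha : t ∈ Z.1) (hb : t ∈ Z.2) :
    t ∈ (lam Z M).1 ∧ t ∈ (lam Z M).2 := by
  obtain ⟨h1, h2⟩ := hM
  have hm1 : t ∉ M.1 := fun hm => (Finset.mem_sdiff.mp (h1 hm)).2 hb
  have hm2 : t ∉ M.2 := fun hm => (Finset.mem_sdiff.mp (h2 hm)).2 ha
  simp only [lam, Finset.mem_union, Finset.mem_sdiff]
  exact ⟨Or.inl ⟨ha, hm1⟩, Or.inl ⟨hb, hm2⟩⟩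


/-- If some pair of size-respecting symbols is related by `Bm`, then the counting
identities hold for the special pair `(Z, Z')` itself. -/
lemma Gm {Z Z' A A' : Symb} {m : ℕ}
    (hZ1 : Z.1.card = m + 1) (hZ2 : Z.2.card = m)
    (hZw1 : ∀ i, oRel (· ≥ ·) (ent Z.1 i) (ent Z.2 i))
    (hZw2 : ∀ i, oRel (· ≥ ·) (ent Z.2 i) (ent Z.1 (i + 1)))
    (hZ'1 : Z'.1.card = m) (hZ'2 : Z'.2.card = m)
    (hZ'w1 : ∀ i, oRel (· ≥ ·) (ent Z'.1 i) (ent Z'.2 i))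
    (hZ'w2 : ∀ i, oRel (· ≥ ·) (ent Z'.2 i) (ent Z'.1 (i + 1)))
    (hAS : A ∈ Sbar Z) (hA'S : A' ∈ Sbar Z')
    (hA1 : A.1.card = m + 1) (hA2 : A.2.card = m)
    (hA'1 : A'.1.card = m) (hA'2 : A'.2.card = m)
    (hB : Bm A A') :
    (∀ t ∈ Z'.2, cnt t Z.1 = cnt t Z'.2 + 1) ∧
      (∀ t ∈ Z'.1, cnt t Z.2 = cnt t Z'.1) := by
  obtain ⟨M, hM, rfl⟩ := hAS
  obtain ⟨M', hM', rfl⟩ := hA'S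
  set A := lam Z M with hA
  set A' := lam Z' M' with hA'
  obtain ⟨c1, c2, c3, c4, c5, c6⟩ := hB
  have sA : ∀ t, cnt t A.1 + cnt t A.2 = cnt t Z.1 + cnt t Z.2 := lam_cnt hM
  have sA' : ∀ t, cnt t A'.1 + cnt t A'.2 = cnt t Z'.1 + cnt t Z'.2 := lam_cnt hM'
  have WZ : ∀ t, cnt t Z.2 ≤ cnt t Z.1 ∧ cnt t Z.1 ≤ cnt t Z.2 + 1 :=
    W (by omega) (by omega) hZw1 hZw2
  have WZ' : ∀ t, cnt t Z'.2 ≤ cnt t Z'.1 ∧ cnt t Z'.1 ≤ cnt t Z'.2 + 1 :=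
    W (by omega) (by omega) hZ'w1 hZ'w2
  have WA1 : ∀ t, cnt t A'.2 ≤ cnt t A.1 ∧ cnt t A.1 ≤ cnt t A'.2 + 1 :=
    W (by omega) (by omega) (fun i => oRel_weaken (c3 i)) c4
  have WA2 : ∀ t, cnt t A.2 ≤ cnt t A'.1 ∧ cnt t A'.1 ≤ cnt t A.2 + 1 :=
    W (by omega) (by omega) c6 (fun i => oRel_weaken (c5 i))
  have TB1 : ∀ t ∈ A'.2, cnt t A.1 = cnt t A'.2 + 1 := fun t ht => T1 (by omega) c3 c4 ht
  have TB2 : ∀ t ∈ A'.1, cnt t A.2 = cnt t A'.1 := fun t ht => T2 (by omega) c6 c5 ht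
  constructor
  · intro t ht
    have hmem : t ∈ A'.1 ∪ A'.2 := lam_mem_union hM' (Finset.mem_union_right _ ht)
    have w1 := WZ t; have w2 := WZ' t; have w3 := WA1 t; have w4 := WA2 t
    have s1 := sA t; have s2 := sA' t
    by_cases hdeg : t ∈ Z'.1
    · obtain ⟨d1, d2⟩ := lam_mem_deg hM' hdeg ht
      have e1 := TB1 t d2
      have e2 := TB2 t d1
      omega
    · have hne : cnt t Z'.1 ≠ cnt t Z'.2 := fun he => hdeg (D1a (by omega) hZ'w1 ht he)
      rw [Finset.mem_union] at hmem
      rcases hmem with h | h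
      · have e2 := TB2 t h; omega
      · have e1 := TB1 t h; omega
  · intro t ht
    have hmem : t ∈ A'.1 ∪ A'.2 := lam_mem_union hM' (Finset.mem_union_left _ ht)
    have w1 := WZ t; have w2 := WZ' t; have w3 := WA1 t; have w4 := WA2 t
    have s1 := sA t; have s2 := sA' t
    by_cases hdeg : t ∈ Z'.2
    · obtain ⟨d1, d2⟩ := lam_mem_deg hM' ht hdeg
      have e1 := TB1 t d2
      have e2 := TB2 t d1
      omega
    · have hne : cnt t Z'.1 ≠ cnt t Z'.2 + 1 := fun he => hdeg (D1b (by omega) hZ'w2 ht he)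
      rw [Finset.mem_union] at hmem
      rcases hmem with h | h
      · have e2 := TB2 t h; omega
      · have e1 := TB1 t h; omega

/-- Analogue of `Gm` for the case `m' = m + 1`, governed by `Bm1`. -/
lemma Gm1 {Z Z' A A' : Symb} {m : ℕ}
    (hZ1 : Z.1.card = m + 1) (hZ2 : Z.2.card = m)
    (hZw1 : ∀ i, oRel (· ≥ ·) (ent Z.1 i) (ent Z.2 i))
    (hZw2 : ∀ i, oRel (· ≥ ·) (ent Z.2 i) (ent Z.1 (i + 1)))
    (hZ'1 : Z'.1.card = m + 1) (hZ'2 : Z'.2.card = m + 1)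
    (hZ'w1 : ∀ i, oRel (· ≥ ·) (ent Z'.1 i) (ent Z'.2 i))
    (hZ'w2 : ∀ i, oRel (· ≥ ·) (ent Z'.2 i) (ent Z'.1 (i + 1)))
    (hAS : A ∈ Sbar Z) (hA'S : A' ∈ Sbar Z')
    (hA1 : A.1.card = m + 1) (hA2 : A.2.card = m)
    (hA'1 : A'.1.card = m + 1) (hA'2 : A'.2.card = m + 1)
    (hB : Bm1 A A') :
    (∀ t ∈ Z.1, cnt t Z'.2 = cnt t Z.1) ∧
      (∀ t ∈ Z.2, cnt t Z'.1 = cnt t Z.2 + 1) := by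
  obtain ⟨M, hM, rfl⟩ := hAS
  obtain ⟨M', hM', rfl⟩ := hA'S
  set A := lam Z M with hA
  set A' := lam Z' M' with hA'
  obtain ⟨c1, c2, c3, c4, c5, c6⟩ := hB
  have sA : ∀ t, cnt t A.1 + cnt t A.2 = cnt t Z.1 + cnt t Z.2 := lam_cnt hM
  have sA' : ∀ t, cnt t A'.1 + cnt t A'.2 = cnt t Z'.1 + cnt t Z'.2 := lam_cnt hM'
  have WZ : ∀ t, cnt t Z.2 ≤ cnt t Z.1 ∧ cnt t Z.1 ≤ cnt t Z.2 + 1 :=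
    W (by omega) (by omega) hZw1 hZw2
  have WZ' : ∀ t, cnt t Z'.2 ≤ cnt t Z'.1 ∧ cnt t Z'.1 ≤ cnt t Z'.2 + 1 :=
    W (by omega) (by omega) hZ'w1 hZ'w2
  have WA1 : ∀ t, cnt t A'.2 ≤ cnt t A.1 ∧ cnt t A.1 ≤ cnt t A'.2 + 1 :=
    W (by omega) (by omega) c3 (fun i => oRel_weaken (c4 i))
  have WA2 : ∀ t, cnt t A.2 ≤ cnt t A'.1 ∧ cnt t A'.1 ≤ cnt t A.2 + 1 :=
    W (by omega) (by omega) (fun i => oRel_weaken (c6 i)) c5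
  have TB1 : ∀ t ∈ A.1, cnt t A'.2 = cnt t A.1 := fun t ht => T2 (by omega) c3 c4 ht
  have TB2 : ∀ t ∈ A.2, cnt t A'.1 = cnt t A.2 + 1 := fun t ht => T1 (by omega) c6 c5 ht
  constructor
  · intro t ht
    have hmem : t ∈ A.1 ∪ A.2 := lam_mem_union hM (Finset.mem_union_left _ ht)
    have w1 := WZ t; have w2 := WZ' t; have w3 := WA1 t; have w4 := WA2 t
    have s1 := sA t; have s2 := sA' t
    by_cases hdeg : t ∈ Z.2
    · obtain ⟨d1, d2⟩ := lam_mem_deg hM ht hdeg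
      have e1 := TB1 t d1
      have e2 := TB2 t d2
      omega
    · have hne : cnt t Z.1 ≠ cnt t Z.2 + 1 := fun he => hdeg (D1b (by omega) hZw2 ht he)
      rw [Finset.mem_union] at hmem
      rcases hmem with h | h
      · have e1 := TB1 t h; omega
      · have e2 := TB2 t h; omega
  · intro t ht
    have hmem : t ∈ A.1 ∪ A.2 := lam_mem_union hM (Finset.mem_union_right _ ht)
    have w1 := WZ t; have w2 := WZ' t; have w3 := WA1 t; have w4 := WA2 t
    have s1 := sA t; have s2 := sA' t
    by_cases hdeg : t ∈ Z.1
    · obtain ⟨d1, d2⟩ := lam_mem_deg hM hdeg ht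
      have e1 := TB1 t d1
      have e2 := TB2 t d2
      omega
    · have hne : cnt t Z.1 ≠ cnt t Z.2 := fun he => hdeg (D1a (by omega) hZw1 ht he)
      rw [Finset.mem_union] at hmem
      rcases hmem with h | h
      · have e1 := TB1 t h; omega
      · have e2 := TB2 t h; omega

end S1

theorem stmt1 (m m' : ℕ) (Z Z' : Symb) (hm : m' = m ∨ m' = m + 1)
    (hZ : IsSpecial1 Z m) (hZ' : IsSpecial0 Z' m')
    (hD : ∃ A A' : Symb, DRel Z Z' m m' A A')
    (k l : ℕ) (hk : 1 ≤ k) (hl : 1 ≤ l) (hkl : l = k ∨ l + 1 = k)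
    (a b : ℕ) (ha : ent Z.1 (k - 1) = some a) (hb : ent Z.2 (l - 1) = some b)
    (hcons : ConsecPair Z a b) :
    DRel Z Z' m m' (lam Z ({a}, {b})) Z' ↔
      ((m' = m ∧ l = k ∧
          oRel (· ≥ ·) (ent Z'.1 (k - 1)) (some a) ∧
          oRel (· > ·) (some b) (ent Z'.2 (k - 1))) ∨
       (m' = m ∧ l + 1 = k ∧
          oRel (· > ·) (some a) (ent Z'.1 (k - 1)) ∧
          oRel (· ≥ ·) (ent Z'.2 (l - 1)) (some b)) ∨
       (m' = m + 1 ∧ l = k ∧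
          oRel (· > ·) (ent Z'.1 (k - 1)) (some a) ∧
          oRel (· ≥ ·) (some b) (ent Z'.2 (k - 1))) ∨
       (m' = m + 1 ∧ l + 1 = k ∧
          oRel (· ≥ ·) (some a) (ent Z'.1 (k - 1)) ∧
          oRel (· > ·) (ent Z'.2 (l - 1)) (some b))) := by
  classical
  obtain ⟨hZ1, hZ2, hZw1, hZw2⟩ := hZ
  obtain ⟨hZ'1, hZ'2, hZ'w1, hZ'w2⟩ := hZ'
  obtain ⟨haI, hbI, hbet⟩ := hcons
  rw [Finset.mem_sdiff] at haI hbI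
  obtain ⟨ha1, ha2⟩ := haI
  obtain ⟨hb2, hb1⟩ := hbI
  set Λ := lam Z ({a}, {b}) with hΛdef
  have hΛ1 : Λ.1 = (Z.1 \ {a}) ∪ {b} := rfl
  have hΛ2 : Λ.2 = (Z.2 \ {b}) ∪ {a} := rfl
  have hSub : SubZI ({a}, {b}) Z :=
    ⟨Finset.singleton_subset_iff.mpr (Finset.mem_sdiff.mpr ⟨ha1, ha2⟩),
     Finset.singleton_subset_iff.mpr (Finset.mem_sdiff.mpr ⟨hb2, hb1⟩)⟩
  have hΛS : Λ ∈ Sbar Z := ⟨({a}, {b}), hSub, rfl⟩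
  have hZ'S : Z' ∈ Sbar Z' :=
    ⟨(∅, ∅), ⟨Finset.empty_subset _, Finset.empty_subset _⟩, by simp [lam]⟩
  have cΛ1 : ∀ t, S1.cnt t Λ.1 + (if t < a then 1 else 0)
      = S1.cnt t Z.1 + (if t < b then 1 else 0) := by
    intro t
    rw [hΛ1]
    exact S1.cnt_swap ha1 hb1 t
  have cΛ2 : ∀ t, S1.cnt t Λ.2 + (if t < b then 1 else 0)
      = S1.cnt t Z.2 + (if t < a then 1 else 0) := by
    intro t
    rw [hΛ2]
    exact S1.cnt_swap hb2 ha2 t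
  have cardΛ1 : Λ.1.card = m + 1 := by rw [hΛ1, S1.card_swap ha1 hb1, hZ1]
  have cardΛ2 : Λ.2.card = m := by rw [hΛ2, S1.card_swap hb2 ha2, hZ2]
  have bΛ1 : b ∈ Λ.1 := by
    rw [hΛ1]
    exact Finset.mem_union_right _ (Finset.mem_singleton_self b)
  have aΛ2 : a ∈ Λ.2 := by
    rw [hΛ2]
    exact Finset.mem_union_right _ (Finset.mem_singleton_self a)
  have hpa : S1.cnt a Z.1 = k - 1 := S1.pos_of_ent ha
  have hqb : S1.cnt b Z.2 = l - 1 := S1.pos_of_ent hb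
  have WZ' : ∀ t, S1.cnt t Z'.2 ≤ S1.cnt t Z'.1 ∧ S1.cnt t Z'.1 ≤ S1.cnt t Z'.2 + 1 :=
    S1.W (by omega) (by omega) hZ'w1 hZ'w2
  have hkcard : k - 1 < m + 1 := by
    have := S1.ent_lt_card ha
    omega
  rcases hkl with hlk | hlk
  · -- case l = k
    subst hlk
    have hab : b < a := by
      have h := hZw1 (l - 1)
      rw [ha, hb] at h
      have h' : b ≤ a := h
      have : a ≠ b := fun he => ha2 (he ▸ hb2)
      omega
    have hbZ1 : S1.cnt b Z.1 = (l - 1) + 1 := by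
      have hlow := S1.cnt_succ_le ha1 hab
      have hup : S1.cnt b Z.1 ≤ (l - 1) + 1 := by
        cases hS : ent Z.1 (l - 1 + 1) with
        | none =>
          rw [S1.ent_none] at hS
          have := S1.cnt_le_card b Z.1
          omega
        | some s' =>
          have h := hZw2 (l - 1)
          rw [hb, hS] at h
          have h' : s' ≤ b := h
          have h2 : ¬ (l - 1 + 1 + 1 ≤ S1.cnt b Z.1) := by
            rw [S1.GT hS]
            omega
          omega
      omega
    have haZ2 : S1.cnt a Z.2 = l - 1 := by
      have hup : S1.cnt a Z.2 ≤ l - 1 := by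
        have := S1.cnt_mono Z.2 (le_of_lt hab)
        omega
      rcases Nat.eq_zero_or_pos (l - 1) with h0 | h0
      · omega
      · obtain ⟨b₂, hb₂⟩ := S1.ent_isSome (S := Z.2) (i := l - 1 - 1)
          (by have := S1.cnt_lt_card_of_mem hb2; omega)
        have h := hZw2 (l - 1 - 1)
        rw [hb₂, show l - 1 - 1 + 1 = l - 1 by omega, ha] at h
        have h' : a ≤ b₂ := h
        have hne : b₂ ≠ a := fun he => ha2 (he ▸ S1.entE hb₂)
        have hstep := S1.cnt_succ_le (S1.entE hb₂) (show a < b₂ by omega)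
        rw [S1.pos_of_ent hb₂] at hstep
        omega
    have entΛ1 : ent Λ.1 (l - 1) = some b := by
      have e := cΛ1 b
      rw [if_pos hab, if_neg (lt_irrefl b)] at e
      have hc : S1.cnt b Λ.1 = l - 1 := by omega
      rw [← hc]
      exact S1.ent_of_pos bΛ1
    have entΛ2 : ent Λ.2 (l - 1) = some a := by
      have e := cΛ2 a
      rw [if_neg (show ¬ a < b by omega), if_neg (lt_irrefl a)] at e
      have hc : S1.cnt a Λ.2 = l - 1 := by omega
      rw [← hc]
      exact S1.ent_of_pos aΛ2
    rcases hm with hm | hm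
    · -- m' = m, l = k
      subst hm
      constructor
      · intro hDrel
        obtain ⟨⟨_, _, hbr⟩, _⟩ := hDrel
        have hBm : Bm Λ Z' := by
          rcases hbr with ⟨_, h⟩ | ⟨hc, _⟩
          · exact h
          · omega
        obtain ⟨d1, d2, d3, d4, d5, d6⟩ := hBm
        refine Or.inl ⟨rfl, rfl, ?_, ?_⟩
        · have h := d6 (l - 1)
          rw [entΛ2] at h
          exact h
        · have h := d3 (l - 1)
          rw [entΛ1] at h
          exact h
      · intro hR
        have hyp : oRel (· ≥ ·) (ent Z'.1 (l - 1)) (some a) ∧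
            oRel (· > ·) (some b) (ent Z'.2 (l - 1)) := by
          rcases hR with ⟨_, _, h1, h2⟩ | ⟨_, hc, _, _⟩ | ⟨hc, _, _, _⟩ | ⟨hc, _, _, _⟩
          · exact ⟨h1, h2⟩
          · omega
          · omega
          · omega
        obtain ⟨hyp1, hyp2⟩ := hyp
        obtain ⟨A, A', hDA⟩ := hD
        obtain ⟨⟨hAS, hA'S, hbr⟩, hA1, hA2, hA'1, hA'2⟩ := hDA
        have hBA : Bm A A' := by
          rcases hbr with ⟨_, h⟩ | ⟨hc, _⟩
          · exact h
          · omega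
        obtain ⟨G1, G2⟩ := S1.Gm hZ1 hZ2 hZw1 hZw2 hZ'1 hZ'2 hZ'w1 hZ'w2 hAS hA'S
          hA1 hA2 hA'1 hA'2 hBA
        have counts1 : ∀ t ∈ Z'.2, S1.cnt t Λ.1 = S1.cnt t Z'.2 + 1 := by
          intro t ht
          have e := cΛ1 t
          have g := G1 t ht
          by_cases h1 : t < a
          · by_cases h2 : t < b
            · rw [if_pos h1, if_pos h2] at e
              omega
            · exfalso
              have hr1 : S1.cnt t Z.1 = (l - 1) + 1 := by
                have hlo := S1.cnt_succ_le ha1 h1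
                have hhi := S1.cnt_mono Z.1 (show b ≤ t by omega)
                omega
              have hq' : S1.cnt t Z'.2 = l - 1 := by omega
              have hent : ent Z'.2 (l - 1) = some t := by
                rw [← hq']
                exact S1.ent_of_pos ht
              rw [hent] at hyp2
              have : b > t := hyp2
              omega
          · rw [if_neg h1, if_neg (show ¬ t < b by omega)] at e
            omega
        have counts2 : ∀ t ∈ Z'.1, S1.cnt t Λ.2 = S1.cnt t Z'.1 := by
          intro t ht
          have e := cΛ2 t
          have g := G2 t ht
          by_cases h1 : t < a
          · by_cases h2 : t < b
            · rw [if_pos h2, if_pos h1] at e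
              omega
            · exfalso
              have hr2 : S1.cnt t Z.2 = l - 1 := by
                have hlo := S1.cnt_mono Z.2 (le_of_lt h1)
                have hhi := S1.cnt_mono Z.2 (show b ≤ t by omega)
                omega
              have hp' : S1.cnt t Z'.1 = l - 1 := by omega
              have hent : ent Z'.1 (l - 1) = some t := by
                rw [← hp']
                exact S1.ent_of_pos ht
              rw [hent] at hyp1
              have : t ≥ a := hyp1
              omega
          · rw [if_neg (show ¬ t < b by omega), if_neg h1] at e
            omega
        obtain ⟨e3, e4⟩ := S1.C1 counts1
        obtain ⟨e6, e5⟩ := S1.C2 counts2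
        exact ⟨⟨hΛS, hZ'S, Or.inl ⟨rfl, by rw [hZ'1, cardΛ2], by rw [hZ'2, cardΛ1],
          e3, e4, e5, e6⟩⟩, cardΛ1, cardΛ2, hZ'1, hZ'2⟩
    · -- m' = m + 1, l = k
      subst hm
      constructor
      · intro hDrel
        obtain ⟨⟨_, _, hbr⟩, _⟩ := hDrel
        have hBm : Bm1 Λ Z' := by
          rcases hbr with ⟨hc, _⟩ | ⟨_, h⟩
          · omega
          · exact h
        obtain ⟨d1, d2, d3, d4, d5, d6⟩ := hBm
        refine Or.inr (Or.inr (Or.inl ⟨rfl, rfl, ?_, ?_⟩))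
        · have h := d6 (l - 1)
          rw [entΛ2] at h
          exact h
        · have h := d3 (l - 1)
          rw [entΛ1] at h
          exact h
      · intro hR
        have hyp : oRel (· > ·) (ent Z'.1 (l - 1)) (some a) ∧
            oRel (· ≥ ·) (some b) (ent Z'.2 (l - 1)) := by
          rcases hR with ⟨hc, _, _, _⟩ | ⟨hc, _, _, _⟩ | ⟨_, _, h1, h2⟩ | ⟨_, hc, _, _⟩
          · omega
          · omega
          · exact ⟨h1, h2⟩
          · omega
        obtain ⟨hyp1, hyp2⟩ := hyp
        obtain ⟨A, A', hDA⟩ := hD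
        obtain ⟨⟨hAS, hA'S, hbr⟩, hA1, hA2, hA'1, hA'2⟩ := hDA
        have hBA : Bm1 A A' := by
          rcases hbr with ⟨hc, _⟩ | ⟨_, h⟩
          · omega
          · exact h
        obtain ⟨G1, G2⟩ := S1.Gm1 hZ1 hZ2 hZw1 hZw2 hZ'1 hZ'2 hZ'w1 hZ'w2 hAS hA'S
          hA1 hA2 hA'1 hA'2 hBA
        have hbetZ1 : ∀ t ∈ Z.1, ¬ (b < t ∧ t < a) := by
          intro t ht ⟨h1, h2⟩
          have e1 := S1.cnt_succ_le ht h1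
          have e2 := S1.cnt_succ_le ha1 h2
          omega
        have hbetZ2 : ∀ t ∈ Z.2, ¬ (b < t ∧ t < a) := by
          intro t ht ⟨h1, h2⟩
          have e1 := S1.cnt_succ_le ht h1
          have e2 := S1.cnt_mono Z.2 (le_of_lt h2)
          omega
        have counts1 : ∀ t ∈ Λ.1, S1.cnt t Z'.2 = S1.cnt t Λ.1 := by
          intro t ht
          rw [hΛ1, Finset.mem_union, Finset.mem_sdiff, Finset.mem_singleton] at ht
          rcases ht with ⟨htZ, htna⟩ | htb
          · have g := G1 t htZ
            have e := cΛ1 t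
            by_cases h1 : t < a
            · have h2 : t < b := by
                have hno := hbetZ1 t htZ
                have : t ≠ b := fun he => hb1 (he ▸ htZ)
                omega
              rw [if_pos h1, if_pos h2] at e
              omega
            · rw [if_neg h1, if_neg (show ¬ t < b by omega)] at e
              omega
          · rw [Finset.mem_singleton] at htb
            subst htb
            have hcb : S1.cnt t Λ.1 = l - 1 := S1.pos_of_ent entΛ1
            have g := G2 t hb2
            have w := WZ' t
            have hup : S1.cnt t Z'.2 ≤ l - 1 := by
              cases hS : ent Z'.2 (l - 1) with
              | none =>
                rw [S1.ent_none] at hS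
                have := S1.cnt_le_card t Z'.2
                omega
              | some d =>
                rw [hS] at hyp2
                have h' : d ≤ t := hyp2
                have : ¬ (l - 1 + 1 ≤ S1.cnt t Z'.2) := by
                  rw [S1.GT hS]
                  omega
                omega
            omega
        have counts2 : ∀ t ∈ Λ.2, S1.cnt t Z'.1 = S1.cnt t Λ.2 + 1 := by
          intro t ht
          rw [hΛ2, Finset.mem_union, Finset.mem_sdiff, Finset.mem_singleton] at ht
          rcases ht with ⟨htZ, htnb⟩ | hta
          · have g := G2 t htZ
            have e := cΛ2 t
            by_cases h1 : t < a
            · have h2 : t < b := by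
                have hno := hbetZ2 t htZ
                omega
              rw [if_pos h2, if_pos h1] at e
              omega
            · rw [if_neg (show ¬ t < b by omega), if_neg h1] at e
              omega
          · rw [Finset.mem_singleton] at hta
            subst hta
            have hca : S1.cnt t Λ.2 = l - 1 := S1.pos_of_ent entΛ2
            have g := G1 t ha1
            have w := WZ' t
            have hlow : l - 1 + 1 ≤ S1.cnt t Z'.1 := by
              obtain ⟨c, hc⟩ := S1.ent_isSome (S := Z'.1) (i := l - 1) (by omega)
              rw [hc] at hyp1
              have h' : t < c := hyp1
              rw [S1.GT hc]
              exact h'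
            omega
        obtain ⟨e3, e4⟩ := S1.C2 counts1
        obtain ⟨e6, e5⟩ := S1.C1 counts2
        exact ⟨⟨hΛS, hZ'S, Or.inr ⟨rfl, by rw [hZ'1, cardΛ2], by rw [hZ'2, cardΛ1],
          e3, e4, e5, e6⟩⟩, cardΛ1, cardΛ2, hZ'1, hZ'2⟩
  · -- case l + 1 = k
    subst hlk
    have ha' : ent Z.1 l = some a := ha
    have hpa' : S1.cnt a Z.1 = l := hpa
    have hkcard' : l < m + 1 := hkcard
    have hab : a < b := by
      have h := hZw2 (l - 1)
      rw [hb, show l - 1 + 1 = l by omega, ha'] at h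
      have h' : a ≤ b := h
      have : a ≠ b := fun he => ha2 (he ▸ hb2)
      omega
    have haZ2 : S1.cnt a Z.2 = l := by
      have hlow := S1.cnt_succ_le hb2 hab
      have hup : S1.cnt a Z.2 ≤ l := by
        cases hS : ent Z.2 l with
        | none =>
          rw [S1.ent_none] at hS
          have := S1.cnt_le_card a Z.2
          omega
        | some b' =>
          have h := hZw1 l
          rw [ha', hS] at h
          have h' : b' ≤ a := h
          have h2 : ¬ (l + 1 ≤ S1.cnt a Z.2) := by
            rw [S1.GT hS]
            omega
          omega
      omega
    have hbZ1 : S1.cnt b Z.1 = l := by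
      have hup : S1.cnt b Z.1 ≤ l := by
        have := S1.cnt_mono Z.1 (le_of_lt hab)
        omega
      obtain ⟨a₂, ha₂⟩ := S1.ent_isSome (S := Z.1) (i := l - 1)
        (by have := S1.cnt_lt_card_of_mem ha1; omega)
      have h := hZw1 (l - 1)
      rw [ha₂, hb] at h
      have h' : b ≤ a₂ := h
      have hne : a₂ ≠ b := fun he => hb1 (he ▸ S1.entE ha₂)
      have hstep := S1.cnt_succ_le (S1.entE ha₂) (show b < a₂ by omega)
      rw [S1.pos_of_ent ha₂] at hstep
      omega
    have entΛ1 : ent Λ.1 l = some b := by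
      have e := cΛ1 b
      rw [if_neg (show ¬ b < a by omega), if_neg (lt_irrefl b)] at e
      have hc : S1.cnt b Λ.1 = l := by omega
      rw [← hc]
      exact S1.ent_of_pos bΛ1
    have entΛ2 : ent Λ.2 (l - 1) = some a := by
      have e := cΛ2 a
      rw [if_pos hab, if_neg (lt_irrefl a)] at e
      have hc : S1.cnt a Λ.2 = l - 1 := by omega
      rw [← hc]
      exact S1.ent_of_pos aΛ2
    rcases hm with hm | hm
    · -- m' = m, l + 1 = k
      subst hm
      constructor
      · intro hDrel
        obtain ⟨⟨_, _, hbr⟩, _⟩ := hDrel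
        have hBm : Bm Λ Z' := by
          rcases hbr with ⟨_, h⟩ | ⟨hc, _⟩
          · exact h
          · omega
        obtain ⟨d1, d2, d3, d4, d5, d6⟩ := hBm
        refine Or.inr (Or.inl ⟨rfl, rfl, ?_, ?_⟩)
        · have h := d5 (l - 1)
          rw [entΛ2, show l - 1 + 1 = l by omega] at h
          exact h
        · have h := d4 (l - 1)
          rw [show l - 1 + 1 = l by omega, entΛ1] at h
          exact h
      · intro hR
        have hyp : oRel (· > ·) (some a) (ent Z'.1 l) ∧
            oRel (· ≥ ·) (ent Z'.2 (l - 1)) (some b) := by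
          rcases hR with ⟨_, hc, _, _⟩ | ⟨_, _, h1, h2⟩ | ⟨hc, _, _, _⟩ | ⟨hc, _, _, _⟩
          · omega
          · exact ⟨h1, h2⟩
          · omega
          · omega
        obtain ⟨hyp1, hyp2⟩ := hyp
        obtain ⟨A, A', hDA⟩ := hD
        obtain ⟨⟨hAS, hA'S, hbr⟩, hA1, hA2, hA'1, hA'2⟩ := hDA
        have hBA : Bm A A' := by
          rcases hbr with ⟨_, h⟩ | ⟨hc, _⟩
          · exact h
          · omega
        obtain ⟨G1, G2⟩ := S1.Gm hZ1 hZ2 hZw1 hZw2 hZ'1 hZ'2 hZ'w1 hZ'w2 hAS hA'S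
          hA1 hA2 hA'1 hA'2 hBA
        have counts1 : ∀ t ∈ Z'.2, S1.cnt t Λ.1 = S1.cnt t Z'.2 + 1 := by
          intro t ht
          have e := cΛ1 t
          have g := G1 t ht
          by_cases h2 : t < b
          · by_cases h1 : t < a
            · rw [if_pos h1, if_pos h2] at e
              omega
            · exfalso
              have hr1 : S1.cnt t Z.1 = l := by
                have hlo := S1.cnt_mono Z.1 (le_of_lt h2)
                have hhi := S1.cnt_mono Z.1 (show a ≤ t by omega)
                omega
              have hq' : S1.cnt t Z'.2 = l - 1 := by omega
              have hent : ent Z'.2 (l - 1) = some t := by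
                rw [← hq']
                exact S1.ent_of_pos ht
              rw [hent] at hyp2
              have : t ≥ b := hyp2
              omega
          · rw [if_neg (show ¬ t < a by omega), if_neg h2] at e
            omega
        have counts2 : ∀ t ∈ Z'.1, S1.cnt t Λ.2 = S1.cnt t Z'.1 := by
          intro t ht
          have e := cΛ2 t
          have g := G2 t ht
          by_cases h2 : t < b
          · by_cases h1 : t < a
            · rw [if_pos h2, if_pos h1] at e
              omega
            · exfalso
              have hr2 : S1.cnt t Z.2 = l := by
                have hlo := S1.cnt_succ_le hb2 h2
                have hhi := S1.cnt_mono Z.2 (show a ≤ t by omega)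
                omega
              have hp' : S1.cnt t Z'.1 = l := by omega
              have hent : ent Z'.1 l = some t := by
                rw [← hp']
                exact S1.ent_of_pos ht
              rw [hent] at hyp1
              have : a > t := hyp1
              omega
          · rw [if_neg (show ¬ t < b by omega), if_neg (show ¬ t < a by omega)] at e
            omega
        obtain ⟨e3, e4⟩ := S1.C1 counts1
        obtain ⟨e6, e5⟩ := S1.C2 counts2
        exact ⟨⟨hΛS, hZ'S, Or.inl ⟨rfl, by rw [hZ'1, cardΛ2], by rw [hZ'2, cardΛ1],
          e3, e4, e5, e6⟩⟩, cardΛ1, cardΛ2, hZ'1, hZ'2⟩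
    · -- m' = m + 1, l + 1 = k
      subst hm
      constructor
      · intro hDrel
        obtain ⟨⟨_, _, hbr⟩, _⟩ := hDrel
        have hBm : Bm1 Λ Z' := by
          rcases hbr with ⟨hc, _⟩ | ⟨_, h⟩
          · omega
          · exact h
        obtain ⟨d1, d2, d3, d4, d5, d6⟩ := hBm
        refine Or.inr (Or.inr (Or.inr ⟨rfl, rfl, ?_, ?_⟩))
        · have h := d5 (l - 1)
          rw [entΛ2, show l - 1 + 1 = l by omega] at h
          exact h
        · have h := d4 (l - 1)
          rw [show l - 1 + 1 = l by omega, entΛ1] at h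
          exact h
      · intro hR
        have hyp : oRel (· ≥ ·) (some a) (ent Z'.1 l) ∧
            oRel (· > ·) (ent Z'.2 (l - 1)) (some b) := by
          rcases hR with ⟨hc, _, _, _⟩ | ⟨hc, _, _, _⟩ | ⟨_, hc, _, _⟩ | ⟨_, _, h1, h2⟩
          · omega
          · omega
          · omega
          · exact ⟨h1, h2⟩
        obtain ⟨hyp1, hyp2⟩ := hyp
        obtain ⟨A, A', hDA⟩ := hD
        obtain ⟨⟨hAS, hA'S, hbr⟩, hA1, hA2, hA'1, hA'2⟩ := hDA
        have hBA : Bm1 A A' := by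
          rcases hbr with ⟨hc, _⟩ | ⟨_, h⟩
          · omega
          · exact h
        obtain ⟨G1, G2⟩ := S1.Gm1 hZ1 hZ2 hZw1 hZw2 hZ'1 hZ'2 hZ'w1 hZ'w2 hAS hA'S
          hA1 hA2 hA'1 hA'2 hBA
        have hbetZ1 : ∀ t ∈ Z.1, ¬ (a < t ∧ t < b) := by
          intro t ht ⟨h1, h2⟩
          have e1 := S1.cnt_succ_le ht h1
          have e2 := S1.cnt_mono Z.1 (le_of_lt h2)
          omega
        have hbetZ2 : ∀ t ∈ Z.2, ¬ (a < t ∧ t < b) := by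
          intro t ht ⟨h1, h2⟩
          have e1 := S1.cnt_succ_le ht h1
          have e2 := S1.cnt_succ_le hb2 h2
          omega
        have counts1 : ∀ t ∈ Λ.1, S1.cnt t Z'.2 = S1.cnt t Λ.1 := by
          intro t ht
          rw [hΛ1, Finset.mem_union, Finset.mem_sdiff, Finset.mem_singleton] at ht
          rcases ht with ⟨htZ, htna⟩ | htb
          · have g := G1 t htZ
            have e := cΛ1 t
            by_cases h2 : t < b
            · have h1 : t < a := by
                have hno := hbetZ1 t htZ
                omega
              rw [if_pos h1, if_pos h2] at e
              omega
            · rw [if_neg (show ¬ t < a by omega), if_neg h2] at e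
              omega
          · rw [Finset.mem_singleton] at htb
            subst htb
            have hcb : S1.cnt t Λ.1 = l := S1.pos_of_ent entΛ1
            have g := G2 t hb2
            have w := WZ' t
            have hlow : l - 1 + 1 ≤ S1.cnt t Z'.2 := by
              obtain ⟨d, hd⟩ := S1.ent_isSome (S := Z'.2) (i := l - 1) (by omega)
              rw [hd] at hyp2
              have h' : t < d := hyp2
              rw [S1.GT hd]
              exact h'
            omega
        have counts2 : ∀ t ∈ Λ.2, S1.cnt t Z'.1 = S1.cnt t Λ.2 + 1 := by
          intro t ht
          rw [hΛ2, Finset.mem_union, Finset.mem_sdiff, Finset.mem_singleton] at ht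
          rcases ht with ⟨htZ, htnb⟩ | hta
          · have g := G2 t htZ
            have e := cΛ2 t
            by_cases h2 : t < b
            · have h1 : t < a := by
                have hno := hbetZ2 t htZ
                have : t ≠ a := fun he => ha2 (he ▸ htZ)
                omega
              rw [if_pos h2, if_pos h1] at e
              omega
            · rw [if_neg h2, if_neg (show ¬ t < a by omega)] at e
              omega
          · rw [Finset.mem_singleton] at hta
            subst hta
            have hca : S1.cnt t Λ.2 = l - 1 := S1.pos_of_ent entΛ2
            have g := G1 t ha1
            have w := WZ' t
            have hup : S1.cnt t Z'.1 ≤ l := by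
              cases hS : ent Z'.1 l with
              | none =>
                rw [S1.ent_none] at hS
                have := S1.cnt_le_card t Z'.1
                omega
              | some c =>
                rw [hS] at hyp1
                have h' : c ≤ t := hyp1
                have : ¬ (l + 1 ≤ S1.cnt t Z'.1) := by
                  rw [S1.GT hS]
                  omega
                omega
            omega
        obtain ⟨e3, e4⟩ := S1.C2 counts1
        obtain ⟨e6, e5⟩ := S1.C1 counts2
        exact ⟨⟨hΛS, hZ'S, Or.inr ⟨rfl, by rw [hZ'1, cardΛ2], by rw [hZ'2, cardΛ1],
          e3, e4, e5, e6⟩⟩, cardΛ1, cardΛ2, hZ'1, hZ'2⟩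
end

section
/- Let Z be a special symbol of defect 1 and size (m+1,m) and Z' a special symbol of defect 0 and size (m',m') with m' = m or m' = m+1. Suppose Ψ and Ψ' are two consecutive pairs in Z'_I such that (Z, Λ_Ψ) ∈ D_{Z,Z'} and (Z, Λ_{Ψ'}) ∈ D_{Z,Z'}. Then either Ψ = Ψ' or Ψ ∩ Ψ' = ∅. -/
open scoped symmDiff

section Aux

lemma rowList_sorted (s : Finset ℕ) : (rowList s).Pairwise (· > ·) := by
  unfold rowList
  exact List.pairwise_reverse.2 (Finset.sortedLT_sort s).pairwise

lemma mem_rowList {s : Finset ℕ} {x : ℕ} : x ∈ rowList s ↔ x ∈ s := by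
  simp [rowList, Finset.mem_sort]

lemma sorted_getElem_filter {l : List ℕ} (h : l.Pairwise (· > ·)) {x : ℕ} (hx : x ∈ l) :
    l[(l.filter (fun y => x < y)).length]? = some x := by
  induction l with
  | nil => cases hx
  | cons a t ih =>
    rw [List.pairwise_cons] at h
    rcases List.mem_cons.1 hx with rfl | hx'
    · have hfil : (x :: t).filter (fun y => x < y) = [] := by
        rw [List.filter_eq_nil_iff]
        intro y hy
        rcases List.mem_cons.1 hy with rfl | hy'
        · simp
        · simp only [decide_eq_true_eq]
          exact not_lt.2 (le_of_lt (h.1 y hy'))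
      rw [hfil]
      simp
    · have hxa : x < a := h.1 x hx'
      have hfil : (a :: t).filter (fun y => x < y) = a :: t.filter (fun y => x < y) := by
        rw [List.filter_cons, if_pos (by simpa using hxa)]
      rw [hfil]
      simpa using ih h.2 hx'

lemma filter_card_eq {s : Finset ℕ} (p : ℕ → Prop) [DecidablePred p] :
    (s.filter p).card = ((rowList s).filter (fun y => p y)).length := by
  rw [rowList, List.filter_reverse, List.length_reverse]
  have hperm : List.Perm (s.sort (· ≤ ·)) s.toList := Finset.sort_perm_toList s (· ≤ ·)
  rw [List.Perm.length_eq (hperm.filter _)]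
  rw [← List.countP_eq_length_filter]
  have : s.toList.countP (fun y => p y) = Multiset.countP (fun y => p y) s.val := by
    conv_rhs => rw [← Multiset.coe_toList s.val]
    rfl
  rw [this, Finset.card_filter]
  simp [Multiset.countP_eq_card_filter, Finset.filter, Finset.card]

lemma ent_self {s : Finset ℕ} {x : ℕ} (hx : x ∈ s) :
    ent s ((s.filter (fun y => x < y)).card) = some x := by
  rw [ent, filter_card_eq]
  exact sorted_getElem_filter (rowList_sorted s) (mem_rowList.2 hx)

lemma ent_lt_card {s : Finset ℕ} {i : ℕ} {x : ℕ} (h : ent s i = some x) : i < s.card := by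
  by_contra hc
  rw [ent, List.getElem?_eq_none (by rw [length_rowList]; omega)] at h
  cases h

lemma ent_exists {s : Finset ℕ} {i : ℕ} (h : i < s.card) : ∃ y, ent s i = some y :=
  ⟨_, List.getElem?_eq_getElem (by rw [length_rowList]; exact h)⟩

lemma auxA (m m' : ℕ) (Z Z' : Symb)
    (c dbig dsmall : ℕ) (hcZ : c ∉ Z'.2)
    (hdb : dbig ∈ Z'.2)
    (hbig : c < dbig) (hsmall : dsmall < c)
    (hD1 : DRel Z Z' m m' Z (lam Z' ({c}, {dbig})))
    (hD2 : DRel Z Z' m m' Z (lam Z' ({c}, {dsmall}))) : False := by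
  obtain ⟨⟨_, _, hcase1⟩, hZc1, hZc2, _, hA2c⟩ := hD1
  obtain ⟨⟨_, _, hcase2⟩, _, _, _, hB2c⟩ := hD2
  set A2 : Finset ℕ := (Z'.2 \ {dbig}) ∪ {c} with hA2
  set B2 : Finset ℕ := (Z'.2 \ {dsmall}) ∪ {c} with hB2
  have hfA : A2.filter (fun y => c < y) = (Z'.2.filter (fun y => c < y)).erase dbig := by
    ext x
    simp only [hA2, Finset.mem_filter, Finset.mem_union, Finset.mem_sdiff,
      Finset.mem_singleton, Finset.mem_erase]
    constructor
    · rintro ⟨(⟨hx, hne⟩ | rfl), hlt⟩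
      · exact ⟨hne, hx, hlt⟩
      · omega
    · rintro ⟨hne, hx, hlt⟩
      exact ⟨Or.inl ⟨hx, hne⟩, hlt⟩
  have hfB : B2.filter (fun y => c < y) = Z'.2.filter (fun y => c < y) := by
    ext x
    simp only [hB2, Finset.mem_filter, Finset.mem_union, Finset.mem_sdiff,
      Finset.mem_singleton]
    constructor
    · rintro ⟨(⟨hx, _⟩ | rfl), hlt⟩
      · exact ⟨hx, hlt⟩
      · omega
    · rintro ⟨hx, hlt⟩
      exact ⟨Or.inl ⟨hx, by omega⟩, hlt⟩
  set j : ℕ := (A2.filter (fun y => c < y)).card with hj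
  have hcardB : (B2.filter (fun y => c < y)).card = j + 1 := by
    rw [hfB, hj, hfA]
    exact (Finset.card_erase_add_one (Finset.mem_filter.2 ⟨hdb, hbig⟩)).symm
  have hcA : c ∈ A2 := Finset.mem_union_right _ (Finset.mem_singleton_self c)
  have hcB : c ∈ B2 := Finset.mem_union_right _ (Finset.mem_singleton_self c)
  have hentA : ent A2 j = some c := ent_self hcA
  have hentB : ent B2 (j + 1) = some c := by
    have := ent_self hcB
    rwa [hcardB] at this
  have hjlt : j + 1 < B2.card := ent_lt_card hentB
  have hm' : m' ≤ m + 1 := by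
    rcases hcase1 with ⟨h, _⟩ | ⟨h, _⟩ <;> omega
  have hjZ : j + 1 < Z.1.card := by
    rw [hZc1]
    have : B2.card = m' := hB2c
    omega
  obtain ⟨z, hz⟩ := ent_exists hjZ
  rcases hcase1 with ⟨hmm, hBm1⟩ | ⟨hmm, hBm1⟩
  · -- m' = m, Bm
    rcases hcase2 with ⟨_, hBm2⟩ | ⟨h', _⟩
    · have h1 := hBm1.2.2.2.1 j
      have h2 := hBm2.2.2.1 (j + 1)
      have e1 : ent (lam Z' ({c}, {dbig})).2 j = some c := hentA
      have e2 : ent (lam Z' ({c}, {dsmall})).2 (j + 1) = some c := hentB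
      rw [e1, hz] at h1
      rw [e2, hz] at h2
      simp only [oRel] at h1 h2
      omega
    · omega
  · -- m' = m + 1, Bm1
    rcases hcase2 with ⟨h', _⟩ | ⟨_, hBm2⟩
    · omega
    · have h1 := hBm1.2.2.2.1 j
      have h2 := hBm2.2.2.1 (j + 1)
      have e1 : ent (lam Z' ({c}, {dbig})).2 j = some c := hentA
      have e2 : ent (lam Z' ({c}, {dsmall})).2 (j + 1) = some c := hentB
      rw [e1, hz] at h1
      rw [e2, hz] at h2
      simp only [oRel] at h1 h2
      omega

lemma auxB (m m' : ℕ) (Z Z' : Symb)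
    (d cbig csmall : ℕ) (hdZ : d ∉ Z'.1)
    (hcb : cbig ∈ Z'.1)
    (hbig : d < cbig) (hsmall : csmall < d)
    (hD1 : DRel Z Z' m m' Z (lam Z' ({cbig}, {d})))
    (hD2 : DRel Z Z' m m' Z (lam Z' ({csmall}, {d}))) : False := by
  obtain ⟨⟨_, _, hcase1⟩, hZc1, hZc2, hA1c, _⟩ := hD1
  obtain ⟨⟨_, _, hcase2⟩, _, _, hB1c, _⟩ := hD2
  set A1 : Finset ℕ := (Z'.1 \ {cbig}) ∪ {d} with hA1
  set B1 : Finset ℕ := (Z'.1 \ {csmall}) ∪ {d} with hB1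
  have hfA : A1.filter (fun y => d < y) = (Z'.1.filter (fun y => d < y)).erase cbig := by
    ext x
    simp only [hA1, Finset.mem_filter, Finset.mem_union, Finset.mem_sdiff,
      Finset.mem_singleton, Finset.mem_erase]
    constructor
    · rintro ⟨(⟨hx, hne⟩ | rfl), hlt⟩
      · exact ⟨hne, hx, hlt⟩
      · omega
    · rintro ⟨hne, hx, hlt⟩
      exact ⟨Or.inl ⟨hx, hne⟩, hlt⟩
  have hfB : B1.filter (fun y => d < y) = Z'.1.filter (fun y => d < y) := by
    ext x
    simp only [hB1, Finset.mem_filter, Finset.mem_union, Finset.mem_sdiff,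
      Finset.mem_singleton]
    constructor
    · rintro ⟨(⟨hx, _⟩ | rfl), hlt⟩
      · exact ⟨hx, hlt⟩
      · omega
    · rintro ⟨hx, hlt⟩
      exact ⟨Or.inl ⟨hx, by omega⟩, hlt⟩
  set j : ℕ := (A1.filter (fun y => d < y)).card with hj
  have hcardB : (B1.filter (fun y => d < y)).card = j + 1 := by
    rw [hfB, hj, hfA]
    exact (Finset.card_erase_add_one (Finset.mem_filter.2 ⟨hcb, hbig⟩)).symm
  have hdA : d ∈ A1 := Finset.mem_union_right _ (Finset.mem_singleton_self d)
  have hdB : d ∈ B1 := Finset.mem_union_right _ (Finset.mem_singleton_self d)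
  have hentA : ent A1 j = some d := ent_self hdA
  have hentB : ent B1 (j + 1) = some d := by
    have := ent_self hdB
    rwa [hcardB] at this
  have hjlt : j + 1 < B1.card := ent_lt_card hentB
  have hjZ : j < Z.2.card := by
    rw [hZc2]
    have hB : B1.card = m' := hB1c
    rcases hcase1 with ⟨h, _⟩ | ⟨h, _⟩ <;> omega
  obtain ⟨z, hz⟩ := ent_exists hjZ
  rcases hcase1 with ⟨hmm, hBm1⟩ | ⟨hmm, hBm1⟩
  · rcases hcase2 with ⟨_, hBm2⟩ | ⟨h', _⟩
    · have h1 := hBm1.2.2.2.2.2 j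
      have h2 := hBm2.2.2.2.2.1 j
      have e1 : ent (lam Z' ({cbig}, {d})).1 j = some d := hentA
      have e2 : ent (lam Z' ({csmall}, {d})).1 (j + 1) = some d := hentB
      rw [e1, hz] at h1
      rw [e2, hz] at h2
      simp only [oRel] at h1 h2
      omega
    · omega
  · rcases hcase2 with ⟨h', _⟩ | ⟨_, hBm2⟩
    · omega
    · have h1 := hBm1.2.2.2.2.2 j
      have h2 := hBm2.2.2.2.2.1 j
      have e1 : ent (lam Z' ({cbig}, {d})).1 j = some d := hentA
      have e2 : ent (lam Z' ({csmall}, {d})).1 (j + 1) = some d := hentB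
      rw [e1, hz] at h1
      rw [e2, hz] at h2
      simp only [oRel] at h1 h2
      omega

end Aux

theorem stmt2 (m m' : ℕ) (Z Z' : Symb) (hm : m' = m ∨ m' = m + 1)
    (hZ : IsSpecial1 Z m) (hZ' : IsSpecial0 Z' m')
    (c d c' d' : ℕ)
    (h1 : ConsecPair Z' c d) (h2 : ConsecPair Z' c' d')
    (hD1 : DRel Z Z' m m' Z (lam Z' ({c}, {d})))
    (hD2 : DRel Z Z' m m' Z (lam Z' ({c'}, {d'}))) :
    (c = c' ∧ d = d') ∨ (c ≠ c' ∧ d ≠ d') := by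
  obtain ⟨hc1, hd1, hcons1⟩ := h1
  obtain ⟨hc2, hd2, hcons2⟩ := h2
  rw [Finset.mem_sdiff] at hc1 hd1 hc2 hd2
  have hmemd : d ∈ (Z'.1 \ Z'.2) ∪ (Z'.2 \ Z'.1) :=
    Finset.mem_union_right _ (Finset.mem_sdiff.2 hd1)
  have hmemd' : d' ∈ (Z'.1 \ Z'.2) ∪ (Z'.2 \ Z'.1) :=
    Finset.mem_union_right _ (Finset.mem_sdiff.2 hd2)
  have hmemc : c ∈ (Z'.1 \ Z'.2) ∪ (Z'.2 \ Z'.1) :=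
    Finset.mem_union_left _ (Finset.mem_sdiff.2 hc1)
  have hmemc' : c' ∈ (Z'.1 \ Z'.2) ∪ (Z'.2 \ Z'.1) :=
    Finset.mem_union_left _ (Finset.mem_sdiff.2 hc2)
  by_cases hcc : c = c'
  · by_cases hdd : d = d'
    · exact Or.inl ⟨hcc, hdd⟩
    · exfalso
      subst hcc
      have hdc : d ≠ c := fun h => hd1.2 (h ▸ hc1.1)
      have hd'c : d' ≠ c := fun h => hd2.2 (h ▸ hc1.1)
      rcases lt_or_gt_of_ne hdc with hlt | hgt
      · rcases lt_or_gt_of_ne hd'c with hlt' | hgt'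
        · rcases lt_or_gt_of_ne hdd with h | h
          · exact hcons1 d' hmemd' ⟨by omega, by omega⟩
          · exact hcons2 d hmemd ⟨by omega, by omega⟩
        · exact auxA m m' Z Z' c d' d hc1.2 hd2.1 hgt' hlt hD2 hD1
      · rcases lt_or_gt_of_ne hd'c with hlt' | hgt'
        · exact auxA m m' Z Z' c d d' hc1.2 hd1.1 hgt hlt' hD1 hD2
        · rcases lt_or_gt_of_ne hdd with h | h
          · exact hcons2 d hmemd ⟨by omega, by omega⟩
          · exact hcons1 d' hmemd' ⟨by omega, by omega⟩
  · by_cases hdd : d = d'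
    · exfalso
      subst hdd
      have hcd : c ≠ d := fun h => hc1.2 (h ▸ hd1.1)
      have hc'd : c' ≠ d := fun h => hc2.2 (h ▸ hd1.1)
      rcases lt_or_gt_of_ne hcd with hlt | hgt
      · rcases lt_or_gt_of_ne hc'd with hlt' | hgt'
        · rcases lt_or_gt_of_ne hcc with h | h
          · exact hcons1 c' hmemc' ⟨by omega, by omega⟩
          · exact hcons2 c hmemc ⟨by omega, by omega⟩
        · exact auxB m m' Z Z' d c' c hd1.2 hc2.1 hgt' hlt hD2 hD1
      · rcases lt_or_gt_of_ne hc'd with hlt' | hgt'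
        · exact auxB m m' Z Z' d c c' hd1.2 hc1.1 hgt hlt' hD1 hD2
        · rcases lt_or_gt_of_ne hcc with h | h
          · exact hcons2 c hmemc ⟨by omega, by omega⟩
          · exact hcons1 c' hmemc' ⟨by omega, by omega⟩
    · exact Or.inr ⟨hcc, hdd⟩
end
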